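/- arXiv:2601.10869 — 11 statements merged into one kernel-verified Lean document; each statement's English description precedes it below -/
import Mathlib

section
/- Let A be an n×n real symmetric positive definite matrix, D an m×m real symmetric negative semidefinite matrix, and B an n×m real matrix. Then the (n+m)×(n+m) block matrix M = [[A, B],[Bᵀ, D]] is invertible if and only if the intersection of the kernel of B (as a linear map ℝᵐ → ℝⁿ) and the kernel of D is the trivial subspace {0}. -/
open Matrix

/-- **Nonsingularity condition for block matrix.**
Let `A` be `n×n` real symmetric positive definite, `D` be `m×m` real symmetric negative
semidefinite, and `B` be `n×m` real.  Then the block matrix `[[A, B],[Bᵀ, D]]` is invertible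
iff `ker B ⊓ ker D = ⊥` (as linear maps `ℝᵐ → ℝⁿ` and `ℝᵐ → ℝᵐ`). -/
theorem block_matrix_nonsingular_iff {n m : ℕ}
    (A : Matrix (Fin n) (Fin n) ℝ) (D : Matrix (Fin m) (Fin m) ℝ)
    (B : Matrix (Fin n) (Fin m) ℝ)
    (hA : A.PosDef) (hD : (-D).PosSemidef) :
    IsUnit (Matrix.fromBlocks A B Bᵀ D) ↔
      LinearMap.ker B.mulVecLin ⊓ LinearMap.ker D.mulVecLin = ⊥ := by
  constructor
  · intro hM
    have hinv : Invertible (Matrix.fromBlocks A B Bᵀ D) := hM.invertible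
    have hinj := Matrix.mulVec_injective_of_invertible (Matrix.fromBlocks A B Bᵀ D)
    rw [Submodule.eq_bot_iff]
    intro y hy
    obtain ⟨hyB, hyD⟩ := Submodule.mem_inf.mp hy
    have hB0 : B *ᵥ y = 0 := hyB
    have hD0 : D *ᵥ y = 0 := hyD
    have h0 : (Matrix.fromBlocks A B Bᵀ D) *ᵥ Sum.elim (0 : Fin n → ℝ) y = 0 := by
      rw [Matrix.fromBlocks_mulVec]
      simp [hB0, hD0]
    have h1 : (Matrix.fromBlocks A B Bᵀ D) *ᵥ (0 : Fin n ⊕ Fin m → ℝ) = 0 := by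
      simp
    have := hinj (h0.trans h1.symm)
    have := congrFun this
    ext i
    simpa using this (Sum.inr i)
  · intro hker
    rw [Matrix.isUnit_iff_isUnit_det, isUnit_iff_ne_zero]
    intro hdet
    obtain ⟨v, hv0, hv⟩ := (Matrix.exists_mulVec_eq_zero_iff).mpr hdet
    set x : Fin n → ℝ := v ∘ Sum.inl with hx
    set y : Fin m → ℝ := v ∘ Sum.inr with hy
    have hvel : v = Sum.elim x y := by
      ext i; cases i <;> rfl
    rw [hvel, Matrix.fromBlocks_mulVec] at hv
    have e1 : A *ᵥ x + B *ᵥ y = 0 := by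
      have := congrFun hv
      ext i; simpa using this (Sum.inl i)
    have e2 : Bᵀ *ᵥ x + D *ᵥ y = 0 := by
      have := congrFun hv
      ext i; simpa using this (Sum.inr i)
    -- inner products
    have t1 : x ⬝ᵥ (A *ᵥ x) + x ⬝ᵥ (B *ᵥ y) = 0 := by
      have := congrArg (fun w => x ⬝ᵥ w) e1
      simpa [dotProduct_add] using this
    have t2 : y ⬝ᵥ (Bᵀ *ᵥ x) + y ⬝ᵥ (D *ᵥ y) = 0 := by
      have := congrArg (fun w => y ⬝ᵥ w) e2
      simpa [dotProduct_add] using this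
    have hsymm : y ⬝ᵥ (Bᵀ *ᵥ x) = x ⬝ᵥ (B *ᵥ y) := by
      rw [Matrix.dotProduct_mulVec, Matrix.vecMul_transpose, dotProduct_comm]
    have key : x ⬝ᵥ (A *ᵥ x) = y ⬝ᵥ (D *ᵥ y) := by
      rw [hsymm] at t2; linarith
    have hDy : y ⬝ᵥ (D *ᵥ y) ≤ 0 := by
      have := hD.dotProduct_mulVec_nonneg y
      simp only [RCLike.star_def, Matrix.neg_mulVec, dotProduct_neg] at this
      simpa using neg_nonneg.mp (by simpa using this)
    have hx0 : x = 0 := by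
      by_contra hx0
      have := hA.dotProduct_mulVec_pos hx0
      simp only [RCLike.star_def, star_trivial] at this
      have : (0:ℝ) < x ⬝ᵥ (A *ᵥ x) := by simpa using this
      linarith [key ▸ this, hDy]
    have hBy : B *ᵥ y = 0 := by
      rw [hx0] at e1; simpa using e1
    have hDy0 : D *ᵥ y = 0 := by
      rw [hx0] at e2; simpa using e2
    have hy0 : y = 0 := by
      have : y ∈ LinearMap.ker B.mulVecLin ⊓ LinearMap.ker D.mulVecLin :=
        Submodule.mem_inf.mpr ⟨hBy, hDy0⟩
      rw [hker] at this
      simpa using this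
    apply hv0
    rw [hvel, hx0, hy0]
    ext i; cases i <;> rfl
end

section
/- Let Π be an n×n real symmetric positive semidefinite matrix, R an m×m real symmetric positive definite matrix, λ > 0 a real number, B an n×m real matrix, and G an n×q real matrix. Assume GᵀΠG − λI is negative semidefinite and that the column space of G is contained in the column space of B. Then the (m+q)×(m+q) block matrix M = [[BᵀΠB + R, BᵀΠG],[GᵀΠB, GᵀΠG − λI]] is invertible. -/
open Matrix

private lemma dot_conj {n p r : ℕ} (A : Matrix (Fin n) (Fin p) ℝ)
    (P : Matrix (Fin n) (Fin n) ℝ) (C : Matrix (Fin n) (Fin r) ℝ)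
    (a : Fin p → ℝ) (b : Fin r → ℝ) :
    a ⬝ᵥ (Aᵀ * P * C) *ᵥ b = (A *ᵥ a) ⬝ᵥ P *ᵥ (C *ᵥ b) := by
  rw [← mulVec_mulVec, ← mulVec_mulVec, dotProduct_mulVec, vecMul_transpose]

private lemma dot_symm {n : ℕ} (P : Matrix (Fin n) (Fin n) ℝ) (hP : Pᵀ = P)
    (a b : Fin n → ℝ) : a ⬝ᵥ P *ᵥ b = b ⬝ᵥ P *ᵥ a := by
  rw [dotProduct_mulVec, ← mulVec_transpose, hP, dotProduct_comm]

/-- **Invertibility under range inclusion.**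
Let `Π ⪰ 0`, `R ≻ 0`, `λ > 0`, with `GᵀΠG − λI ⪯ 0` and `range G ⊆ range B`.  Then the
block matrix `[[BᵀΠB + R, BᵀΠG],[GᵀΠB, GᵀΠG − λI]]` is invertible. -/
theorem range_inclusion_invertible {n m q : ℕ}
    (Pm : Matrix (Fin n) (Fin n) ℝ) (R : Matrix (Fin m) (Fin m) ℝ)
    (B : Matrix (Fin n) (Fin m) ℝ) (G : Matrix (Fin n) (Fin q) ℝ) (lam : ℝ)
    (hPm : Pm.PosSemidef) (hR : R.PosDef) (hlam : 0 < lam)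
    (hNSD : (lam • (1 : Matrix (Fin q) (Fin q) ℝ) - Gᵀ * Pm * G).PosSemidef)
    (hrange : LinearMap.range G.mulVecLin ≤ LinearMap.range B.mulVecLin) :
    IsUnit (Matrix.fromBlocks (Bᵀ * Pm * B + R) (Bᵀ * Pm * G) (Gᵀ * Pm * B)
      (Gᵀ * Pm * G - lam • (1 : Matrix (Fin q) (Fin q) ℝ))) := by
  rw [Matrix.isUnit_iff_isUnit_det, isUnit_iff_ne_zero]
  intro hdet
  obtain ⟨x, hx0, hx⟩ := Matrix.exists_mulVec_eq_zero_iff.mpr hdet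
  rw [Matrix.fromBlocks_mulVec] at hx
  set u : Fin m → ℝ := x ∘ Sum.inl with hu
  set v : Fin q → ℝ := x ∘ Sum.inr with hv
  have eq1 : (Bᵀ * Pm * B + R) *ᵥ u + (Bᵀ * Pm * G) *ᵥ v = 0 := by
    funext i; exact congrFun hx (Sum.inl i)
  have eq2 : (Gᵀ * Pm * B) *ᵥ u + (Gᵀ * Pm * G - lam • 1) *ᵥ v = 0 := by
    funext i; exact congrFun hx (Sum.inr i)
  have hPt : Pmᵀ = Pm := by
    have := hPm.1.eq
    rwa [Matrix.conjTranspose_eq_transpose_of_trivial] at this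
  -- dot eq1 with u
  have h1 : (B *ᵥ u) ⬝ᵥ Pm *ᵥ (B *ᵥ u) + u ⬝ᵥ R *ᵥ u
      + (B *ᵥ u) ⬝ᵥ Pm *ᵥ (G *ᵥ v) = 0 := by
    have h := congrArg (fun w => u ⬝ᵥ w) eq1
    simp only [Matrix.add_mulVec, dotProduct_add, dotProduct_zero] at h
    rw [dot_conj B Pm B, dot_conj B Pm G] at h
    linarith
  -- dot eq2 with v
  have h2 : (G *ᵥ v) ⬝ᵥ Pm *ᵥ (B *ᵥ u) + (G *ᵥ v) ⬝ᵥ Pm *ᵥ (G *ᵥ v)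
      - lam * (v ⬝ᵥ v) = 0 := by
    have h := congrArg (fun w => v ⬝ᵥ w) eq2
    simp only [Matrix.sub_mulVec, dotProduct_add, dotProduct_sub, dotProduct_zero,
      Matrix.smul_mulVec, Matrix.one_mulVec, dotProduct_smul,
      smul_eq_mul] at h
    rw [dot_conj G Pm B, dot_conj G Pm G] at h
    linarith
  have hsym : (G *ᵥ v) ⬝ᵥ Pm *ᵥ (B *ᵥ u) = (B *ᵥ u) ⬝ᵥ Pm *ᵥ (G *ᵥ v) :=
    dot_symm Pm hPt _ _
  have hzq : (G *ᵥ v) ⬝ᵥ Pm *ᵥ (G *ᵥ v) ≤ lam * (v ⬝ᵥ v) := by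
    have h := hNSD.dotProduct_mulVec_nonneg v
    simp only [star_trivial, Matrix.sub_mulVec, dotProduct_sub,
      Matrix.smul_mulVec, Matrix.one_mulVec, dotProduct_smul,
      smul_eq_mul] at h
    rw [dot_conj G Pm G] at h
    linarith
  have hyq : 0 ≤ (B *ᵥ u) ⬝ᵥ Pm *ᵥ (B *ᵥ u) := by simpa using hPm.dotProduct_mulVec_nonneg (B *ᵥ u)
  -- conclude u = 0
  have hu0 : u = 0 := by
    by_contra h
    have hru := hR.dotProduct_mulVec_pos h
    simp only [star_trivial] at hru
    rw [hsym] at h2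
    linarith
  rw [hu0] at eq1 eq2
  simp only [Matrix.mulVec_zero, zero_add] at eq1 eq2
  -- now Bᵀ (Pm (G v)) = 0
  have hBw : Bᵀ *ᵥ (Pm *ᵥ (G *ᵥ v)) = 0 := by
    have hrw : (Bᵀ * Pm * G) *ᵥ v = Bᵀ *ᵥ (Pm *ᵥ (G *ᵥ v)) := by
      rw [mulVec_mulVec, mulVec_mulVec, Matrix.mul_assoc]
    rw [← hrw]; exact eq1
  -- range inclusion gives Gᵀ (Pm (G v)) = 0
  have hGw : Gᵀ *ᵥ (Pm *ᵥ (G *ᵥ v)) = 0 := by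
    set c := Gᵀ *ᵥ (Pm *ᵥ (G *ᵥ v)) with hc
    obtain ⟨d, hd⟩ := hrange ⟨c, rfl⟩
    have hBd : B *ᵥ d = G *ᵥ c := by simpa [Matrix.mulVecLin_apply] using hd
    have hdot : c ⬝ᵥ c = 0 := by
      calc c ⬝ᵥ c = (G *ᵥ c) ⬝ᵥ (Pm *ᵥ (G *ᵥ v)) := by
            rw [hc, dotProduct_mulVec, vecMul_transpose]
        _ = (B *ᵥ d) ⬝ᵥ (Pm *ᵥ (G *ᵥ v)) := by rw [hBd]
        _ = d ⬝ᵥ (Bᵀ *ᵥ (Pm *ᵥ (G *ᵥ v))) := by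
            rw [dotProduct_mulVec d Bᵀ, vecMul_transpose]
        _ = 0 := by rw [hBw]; simp
    exact dotProduct_self_eq_zero.mp hdot
  -- eq2 gives lam • v = Gᵀ (Pm (G v)) = 0
  have hv0 : v = 0 := by
    have hrw : (Gᵀ * Pm * G - lam • 1) *ᵥ v
        = Gᵀ *ᵥ (Pm *ᵥ (G *ᵥ v)) - lam • v := by
      rw [Matrix.sub_mulVec, mulVec_mulVec, mulVec_mulVec, Matrix.mul_assoc,
        Matrix.smul_mulVec, Matrix.one_mulVec]
    rw [hrw, hGw, zero_sub, neg_eq_zero] at eq2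
    rcases smul_eq_zero.mp eq2 with h' | h'
    · exact absurd h' (ne_of_gt hlam)
    · exact h'
  apply hx0
  funext i
  cases i with
  | inl i => exact congrFun hu0 i
  | inr i => exact congrFun hv0 i
end

section
/- Let A be n×n, B n×m, G n×q real matrices, Q an n×n real symmetric positive semidefinite matrix, R an m×m real symmetric positive definite matrix, and Π an n×n real symmetric positive semidefinite matrix. Let λ > 0 be a real number with λ ≥ ‖GᵀΠG‖ (operator 2-norm), and assume the column space of G is contained in the column space of B. Then the block matrix M(λ,Π) = [[BᵀΠB + R, BᵀΠG],[GᵀΠB, GᵀΠG − λI]] is invertible, and the matrix Π⁺ := Q + AᵀΠA − AᵀΠ[B G] M(λ,Π)⁻¹ [B G]ᵀ ΠA is symmetric positive semidefinite. -/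
open Matrix

noncomputable def l2n {a b : ℕ} (M : Matrix (Fin a) (Fin b) ℝ) : ℝ :=
  ‖LinearMap.toContinuousLinearMap (Matrix.toEuclideanLin M)‖

lemma dotT {k l : ℕ} (B : Matrix (Fin k) (Fin l) ℝ) (u : Fin l → ℝ) (t : Fin k → ℝ) :
    u ⬝ᵥ (Bᵀ *ᵥ t) = (B *ᵥ u) ⬝ᵥ t := by
  rw [dotProduct_mulVec, vecMul_transpose, dotProduct_comm, dotProduct_mulVec]

lemma tripleQuad {k l : ℕ} (X : Matrix (Fin k) (Fin l) ℝ) (S : Matrix (Fin k) (Fin k) ℝ)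
    (x : Fin l → ℝ) : x ⬝ᵥ (Xᵀ * S * X) *ᵥ x = (X *ᵥ x) ⬝ᵥ S *ᵥ (X *ᵥ x) := by
  rw [← Matrix.mulVec_mulVec, ← Matrix.mulVec_mulVec, dotT]

lemma dotSym {k : ℕ} {P : Matrix (Fin k) (Fin k) ℝ} (h : Pᵀ = P) (a b : Fin k → ℝ) :
    a ⬝ᵥ (P *ᵥ b) = b ⬝ᵥ (P *ᵥ a) := by
  rw [dotProduct_mulVec, ← h, vecMul_transpose, dotProduct_comm, h]

lemma l2n_quad_bound {a : ℕ} (D : Matrix (Fin a) (Fin a) ℝ) {lam : ℝ} (hlam : 0 ≤ lam)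
    (h : l2n D ≤ lam) (v : Fin a → ℝ) : v ⬝ᵥ (D *ᵥ v) ≤ lam * (v ⬝ᵥ v) := by
  set T := LinearMap.toContinuousLinearMap (Matrix.toEuclideanLin D) with hT
  set v' : EuclideanSpace ℝ (Fin a) := (WithLp.equiv 2 (Fin a → ℝ)).symm v with hv'
  have h1 : v ⬝ᵥ (D *ᵥ v) = inner ℝ v' (T v') := by
    simp [hT, hv', PiLp.inner_apply, dotProduct, RCLike.inner_apply, mul_comm]
  have h2 : inner ℝ v' (T v') ≤ ‖v'‖ * ‖T v'‖ := real_inner_le_norm _ _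
  have h3 : ‖T v'‖ ≤ lam * ‖v'‖ :=
    (T.le_opNorm v').trans (mul_le_mul_of_nonneg_right h (norm_nonneg v'))
  have h4 : (v ⬝ᵥ v) = ‖v'‖ * ‖v'‖ := by
    rw [← real_inner_self_eq_norm_mul_norm]
    simp [hv', PiLp.inner_apply, dotProduct, RCLike.inner_apply]
    rw [EuclideanSpace.norm_eq, Real.sq_sqrt (Finset.sum_nonneg fun i _ => sq_nonneg _)]
    simp [sq]
  nlinarith [norm_nonneg v', norm_nonneg (T v')]

/-- **One Riccati step preserves positive semidefiniteness.**
Let `Q ⪰ 0`, `R ≻ 0`, `Π ⪰ 0`, `λ > 0` with `λ ≥ ‖GᵀΠG‖` and `range G ⊆ range B`.  Then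
`M(λ,Π) = [[BᵀΠB + R, BᵀΠG],[GᵀΠB, GᵀΠG − λI]]` is invertible and
`Π⁺ = Q + AᵀΠA − AᵀΠ[B G] M(λ,Π)⁻¹ [B G]ᵀ ΠA` is symmetric positive semidefinite. -/
theorem riccati_step_psd {n m q : ℕ}
    (A : Matrix (Fin n) (Fin n) ℝ) (B : Matrix (Fin n) (Fin m) ℝ)
    (G : Matrix (Fin n) (Fin q) ℝ)
    (Q : Matrix (Fin n) (Fin n) ℝ) (R : Matrix (Fin m) (Fin m) ℝ)
    (Pm : Matrix (Fin n) (Fin n) ℝ) (lam : ℝ)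
    (hQ : Q.PosSemidef) (hR : R.PosDef) (hPm : Pm.PosSemidef)
    (hlam : 0 < lam) (hlamge : l2n (Gᵀ * Pm * G) ≤ lam)
    (hrange : LinearMap.range G.mulVecLin ≤ LinearMap.range B.mulVecLin) :
    IsUnit (Matrix.fromBlocks (Bᵀ * Pm * B + R) (Bᵀ * Pm * G) (Gᵀ * Pm * B)
        (Gᵀ * Pm * G - lam • (1 : Matrix (Fin q) (Fin q) ℝ))) ∧
      (Q + Aᵀ * Pm * A -
        Aᵀ * Pm * Matrix.fromCols B G *
          (Matrix.fromBlocks (Bᵀ * Pm * B + R) (Bᵀ * Pm * G) (Gᵀ * Pm * B)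
            (Gᵀ * Pm * G - lam • (1 : Matrix (Fin q) (Fin q) ℝ)))⁻¹ *
          (Matrix.fromCols B G)ᵀ * Pm * A).PosSemidef := by
  classical
  have hPmT : Pmᵀ = Pm := by
    rw [← Matrix.conjTranspose_eq_transpose_of_trivial]; exact hPm.1
  have hQT : Qᵀ = Q := by
    rw [← Matrix.conjTranspose_eq_transpose_of_trivial]; exact hQ.1
  have hRT : Rᵀ = R := by
    rw [← Matrix.conjTranspose_eq_transpose_of_trivial]; exact hR.1
  have hquad : ∀ v : Fin q → ℝ, v ⬝ᵥ ((Gᵀ * Pm * G) *ᵥ v) ≤ lam * (v ⬝ᵥ v) :=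
    l2n_quad_bound _ hlam.le hlamge
  have hXT : (Bᵀ * Pm * G)ᵀ = Gᵀ * Pm * B := by
    rw [transpose_mul, transpose_mul, transpose_transpose, hPmT, Matrix.mul_assoc]
  have hDT : (Gᵀ * Pm * G)ᵀ = Gᵀ * Pm * G := by
    rw [transpose_mul, transpose_mul, transpose_transpose, hPmT, Matrix.mul_assoc]
  have hBPB : (Bᵀ * Pm * B).PosSemidef := by
    have := hPm.conjTranspose_mul_mul_same B
    rwa [Matrix.conjTranspose_eq_transpose_of_trivial] at this
  have hS : (Bᵀ * Pm * B + R).PosDef := Matrix.PosDef.posSemidef_add hBPB hR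
  have hSinv : (Bᵀ * Pm * B + R)⁻¹.PosDef := hS.inv
  -- positive semidefiniteness of lam•1 - GᵀPmG
  have hP1 : (lam • (1 : Matrix (Fin q) (Fin q) ℝ) - Gᵀ * Pm * G).PosSemidef := by
    refine Matrix.PosSemidef.of_dotProduct_mulVec_nonneg ?_ ?_
    · show _ = _
      rw [Matrix.conjTranspose_eq_transpose_of_trivial, transpose_sub, transpose_smul,
        transpose_one, hDT]
    · intro x
      have := hquad x
      simp only [star_trivial, sub_mulVec, dotProduct_sub, smul_mulVec, one_mulVec,
        dotProduct_smul, smul_eq_mul]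
      linarith
  -- positive semidefiniteness of (GᵀPmB) S⁻¹ (BᵀPmG)
  have hP2 : (Gᵀ * Pm * B * (Bᵀ * Pm * B + R)⁻¹ * (Bᵀ * Pm * G)).PosSemidef := by
    have := hSinv.posSemidef.conjTranspose_mul_mul_same (Bᵀ * Pm * G)
    rwa [Matrix.conjTranspose_eq_transpose_of_trivial, hXT] at this
  -- the (negated) Schur complement is positive definite
  have hT' : ((lam • (1 : Matrix (Fin q) (Fin q) ℝ) - Gᵀ * Pm * G) +
      Gᵀ * Pm * B * (Bᵀ * Pm * B + R)⁻¹ * (Bᵀ * Pm * G)).PosDef := by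
    refine Matrix.PosDef.of_dotProduct_mulVec_pos (hP1.1.add hP2.1) (fun x hx => ?_)
    simp only [star_trivial, add_mulVec, dotProduct_add]
    have h1 : 0 ≤ x ⬝ᵥ (lam • (1 : Matrix (Fin q) (Fin q) ℝ) - Gᵀ * Pm * G) *ᵥ x := by
      simpa using hP1.dotProduct_mulVec_nonneg x
    by_cases hy : (Bᵀ * Pm * G) *ᵥ x = 0
    · have h2 : x ⬝ᵥ (Gᵀ * Pm * B * (Bᵀ * Pm * B + R)⁻¹ * (Bᵀ * Pm * G)) *ᵥ x = 0 := by
        rw [← Matrix.mulVec_mulVec, hy, Matrix.mulVec_zero, dotProduct_zero]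
      have h3 : x ⬝ᵥ (lam • (1 : Matrix (Fin q) (Fin q) ℝ) - Gᵀ * Pm * G) *ᵥ x
          = lam * (x ⬝ᵥ x) := by
        obtain ⟨wv, hwv⟩ := hrange ⟨x, rfl⟩
        simp only [mulVecLin_apply] at hwv
        have hDx : x ⬝ᵥ (Gᵀ * Pm * G) *ᵥ x = 0 := by
          rw [tripleQuad]
          nth_rewrite 1 [← hwv]
          rw [← dotT, Matrix.mulVec_mulVec, Matrix.mulVec_mulVec, hy, dotProduct_zero]
        simp only [sub_mulVec, dotProduct_sub, smul_mulVec, one_mulVec,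
          dotProduct_smul, smul_eq_mul, hDx, sub_zero]
      have hxx : 0 < x ⬝ᵥ x := by
        have := Matrix.dotProduct_star_self_pos_iff (v := x)
        simpa using this.mpr hx
      rw [h2, h3]
      positivity
    · have h2 : 0 < x ⬝ᵥ (Gᵀ * Pm * B * (Bᵀ * Pm * B + R)⁻¹ * (Bᵀ * Pm * G)) *ᵥ x := by
        have := hSinv.dotProduct_mulVec_pos hy
        simp only [star_trivial] at this
        calc (0:ℝ) < ((Bᵀ * Pm * G) *ᵥ x) ⬝ᵥ (Bᵀ * Pm * B + R)⁻¹ *ᵥ ((Bᵀ * Pm * G) *ᵥ x) := this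
        _ = x ⬝ᵥ (Gᵀ * Pm * B * (Bᵀ * Pm * B + R)⁻¹ * (Bᵀ * Pm * G)) *ᵥ x := by
            rw [← hXT, tripleQuad]
      linarith
  -- invertibility
  haveI hSi : Invertible (Bᵀ * Pm * B + R) := hS.isUnit.invertible
  have hdetM : (Matrix.fromBlocks (Bᵀ * Pm * B + R) (Bᵀ * Pm * G) (Gᵀ * Pm * B)
      (Gᵀ * Pm * G - lam • (1 : Matrix (Fin q) (Fin q) ℝ))).det =
      (Bᵀ * Pm * B + R).det * ((Gᵀ * Pm * G - lam • (1 : Matrix (Fin q) (Fin q) ℝ)) -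
        Gᵀ * Pm * B * ⅟(Bᵀ * Pm * B + R) * (Bᵀ * Pm * G)).det :=
    Matrix.det_fromBlocks₁₁ _ _ _ _
  have hneg : (Gᵀ * Pm * G - lam • (1 : Matrix (Fin q) (Fin q) ℝ)) -
      Gᵀ * Pm * B * ⅟(Bᵀ * Pm * B + R) * (Bᵀ * Pm * G) =
      -((lam • (1 : Matrix (Fin q) (Fin q) ℝ) - Gᵀ * Pm * G) +
        Gᵀ * Pm * B * (Bᵀ * Pm * B + R)⁻¹ * (Bᵀ * Pm * G)) := by
    rw [Matrix.invOf_eq_nonsing_inv]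
    abel
  have hunit : IsUnit (Matrix.fromBlocks (Bᵀ * Pm * B + R) (Bᵀ * Pm * G) (Gᵀ * Pm * B)
      (Gᵀ * Pm * G - lam • (1 : Matrix (Fin q) (Fin q) ℝ))) := by
    rw [Matrix.isUnit_iff_isUnit_det, hdetM, hneg, isUnit_iff_ne_zero]
    refine mul_ne_zero hS.det_pos.ne' ?_
    rw [Matrix.det_neg]
    exact mul_ne_zero (pow_ne_zero _ (by norm_num)) hT'.det_pos.ne'
  refine ⟨hunit, ?_⟩
  have hBPBT : (Bᵀ * Pm * B)ᵀ = Bᵀ * Pm * B := by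
    rw [transpose_mul, transpose_mul, transpose_transpose, hPmT, Matrix.mul_assoc]
  have hXT' : (Gᵀ * Pm * B)ᵀ = Bᵀ * Pm * G := by rw [← hXT, transpose_transpose]
  set MM := Matrix.fromBlocks (Bᵀ * Pm * B + R) (Bᵀ * Pm * G) (Gᵀ * Pm * B)
      (Gᵀ * Pm * G - lam • (1 : Matrix (Fin q) (Fin q) ℝ)) with hMM
  have hdet : IsUnit MM.det := (Matrix.isUnit_iff_isUnit_det _).mp hunit
  have hMMT : MMᵀ = MM := by
    rw [hMM, Matrix.fromBlocks_transpose, transpose_add, transpose_sub, transpose_smul,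
      transpose_one, hBPBT, hRT, hDT, hXT, hXT']
  have hMinvT : (MM⁻¹)ᵀ = MM⁻¹ := by rw [Matrix.transpose_nonsing_inv, hMMT]
  have hMinv : MM * MM⁻¹ = 1 := Matrix.mul_nonsing_inv _ hdet
  refine Matrix.PosSemidef.of_dotProduct_mulVec_nonneg ?_ ?_
  · show _ = _
    rw [Matrix.conjTranspose_eq_transpose_of_trivial]
    simp only [transpose_sub, transpose_add, transpose_mul, transpose_transpose, hPmT, hQT,
      hMinvT, Matrix.mul_assoc]
  · intro x
    simp only [star_trivial]
    set y := A *ᵥ x with hy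
    set w : Fin m ⊕ Fin q → ℝ := Sum.elim (Bᵀ *ᵥ (Pm *ᵥ y)) (Gᵀ *ᵥ (Pm *ᵥ y)) with hw
    set z := -(MM⁻¹ *ᵥ w) with hz
    set u := z ∘ Sum.inl with hu
    set v := z ∘ Sum.inr with hv
    have hzel : z = Sum.elim u v := by funext i; cases i <;> rfl
    have hMz : MM *ᵥ z = -w := by
      rw [hz, Matrix.mulVec_neg, Matrix.mulVec_mulVec, hMinv, Matrix.one_mulVec]
    have hr1 : (Bᵀ * Pm * B + R) *ᵥ u + (Bᵀ * Pm * G) *ᵥ v = -(Bᵀ *ᵥ (Pm *ᵥ y)) := by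
      funext i
      have h := congrFun hMz (Sum.inl i)
      rw [hzel] at h
      simpa [hMM, Matrix.fromBlocks_mulVec, hw] using h
    have hr2 : (Gᵀ * Pm * B) *ᵥ u +
        (Gᵀ * Pm * G - lam • (1 : Matrix (Fin q) (Fin q) ℝ)) *ᵥ v = -(Gᵀ *ᵥ (Pm *ᵥ y)) := by
      funext i
      have h := congrFun hMz (Sum.inr i)
      rw [hzel] at h
      simpa [hMM, Matrix.fromBlocks_mulVec, hw] using h
    have F1 : (B *ᵥ u) ⬝ᵥ (Pm *ᵥ y) + (B *ᵥ u) ⬝ᵥ (Pm *ᵥ (B *ᵥ u)) +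
        (B *ᵥ u) ⬝ᵥ (Pm *ᵥ (G *ᵥ v)) + u ⬝ᵥ (R *ᵥ u) = 0 := by
      have h := congrArg (fun t => u ⬝ᵥ t) hr1
      simp only [dotProduct_add, dotProduct_neg, Matrix.add_mulVec,
        ← Matrix.mulVec_mulVec, dotT] at h
      linarith
    have F2 : (G *ᵥ v) ⬝ᵥ (Pm *ᵥ y) + (G *ᵥ v) ⬝ᵥ (Pm *ᵥ (B *ᵥ u)) +
        (G *ᵥ v) ⬝ᵥ (Pm *ᵥ (G *ᵥ v)) = lam * (v ⬝ᵥ v) := by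
      have h := congrArg (fun t => v ⬝ᵥ t) hr2
      simp only [dotProduct_add, dotProduct_neg, Matrix.sub_mulVec, dotProduct_sub,
        smul_mulVec, Matrix.one_mulVec, dotProduct_smul, smul_eq_mul,
        ← Matrix.mulVec_mulVec, dotT] at h
      linarith
    have hUw : (Matrix.fromCols B G)ᵀ *ᵥ (Pm *ᵥ y) = w := by
      rw [transpose_fromCols, fromRows_mulVec, hw]
    have hUz : Matrix.fromCols B G *ᵥ z = B *ᵥ u + G *ᵥ v := by
      rw [hzel, fromCols_mulVec_sumElim]
    have h3 : x ⬝ᵥ ((Aᵀ * Pm * Matrix.fromCols B G * MM⁻¹ *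
        (Matrix.fromCols B G)ᵀ * Pm * A) *ᵥ x)
        = -(y ⬝ᵥ (Pm *ᵥ (B *ᵥ u)) + y ⬝ᵥ (Pm *ᵥ (G *ᵥ v))) := by
      simp only [← Matrix.mulVec_mulVec]
      rw [← hy, hUw]
      have hzz : MM⁻¹ *ᵥ w = -z := by rw [hz, neg_neg]
      rw [hzz, Matrix.mulVec_neg, hUz, Matrix.mulVec_neg, dotT, ← hy, dotProduct_neg,
        Matrix.mulVec_add, dotProduct_add]
    have key : x ⬝ᵥ ((Q + Aᵀ * Pm * A - Aᵀ * Pm * Matrix.fromCols B G * MM⁻¹ *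
        (Matrix.fromCols B G)ᵀ * Pm * A) *ᵥ x)
        = x ⬝ᵥ (Q *ᵥ x) + y ⬝ᵥ (Pm *ᵥ y) +
          (y ⬝ᵥ (Pm *ᵥ (B *ᵥ u)) + y ⬝ᵥ (Pm *ᵥ (G *ᵥ v))) := by
      rw [Matrix.sub_mulVec, Matrix.add_mulVec, dotProduct_sub, dotProduct_add, h3,
        tripleQuad, ← hy]
      ring
    rw [key]
    have n1 : 0 ≤ x ⬝ᵥ (Q *ᵥ x) := by simpa using hQ.dotProduct_mulVec_nonneg x
    have n3 : 0 ≤ u ⬝ᵥ (R *ᵥ u) := by simpa using hR.posSemidef.dotProduct_mulVec_nonneg u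
    have n2 : 0 ≤ (y + B *ᵥ u) ⬝ᵥ (Pm *ᵥ (y + B *ᵥ u)) := by simpa using hPm.dotProduct_mulVec_nonneg (y + B *ᵥ u)
    have e2 : (y + B *ᵥ u) ⬝ᵥ (Pm *ᵥ (y + B *ᵥ u)) =
        y ⬝ᵥ (Pm *ᵥ y) + y ⬝ᵥ (Pm *ᵥ (B *ᵥ u)) + (B *ᵥ u) ⬝ᵥ (Pm *ᵥ y) +
          (B *ᵥ u) ⬝ᵥ (Pm *ᵥ (B *ᵥ u)) := by
      simp only [Matrix.mulVec_add, dotProduct_add, add_dotProduct]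
      ring
    have n4 : (G *ᵥ v) ⬝ᵥ (Pm *ᵥ (G *ᵥ v)) ≤ lam * (v ⬝ᵥ v) := by
      have := hquad v
      rwa [tripleQuad] at this
    have s1 : y ⬝ᵥ (Pm *ᵥ (B *ᵥ u)) = (B *ᵥ u) ⬝ᵥ (Pm *ᵥ y) := dotSym hPmT _ _
    have s2 : y ⬝ᵥ (Pm *ᵥ (G *ᵥ v)) = (G *ᵥ v) ⬝ᵥ (Pm *ᵥ y) := dotSym hPmT _ _
    have s3 : (B *ᵥ u) ⬝ᵥ (Pm *ᵥ (G *ᵥ v)) = (G *ᵥ v) ⬝ᵥ (Pm *ᵥ (B *ᵥ u)) := dotSym hPmT _ _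
    linarith
end

section
/- Let A be n×n, B n×m, G n×q real matrices with G ≠ 0 and the column space of G contained in the column space of B. Let Q be an n×n real symmetric positive definite matrix, R an m×m real symmetric positive definite matrix, and P_f an n×n real symmetric positive definite matrix. Fix a horizon N ≥ 1 and a vector of multipliers (λ₀,…,λ_{N−1}) ∈ ℝᴺ. Define backward: Π_N = P_f, and for k = N−1 down to 0, Π_k = Q + AᵀΠ_{k+1}A − AᵀΠ_{k+1}[B G] M_k⁻¹ [B G]ᵀ Π_{k+1}A, where M_k = [[BᵀΠ_{k+1}B + R, BᵀΠ_{k+1}G],[GᵀΠ_{k+1}B, GᵀΠ_{k+1}G − λ_k I]]. If λ_{N−1} ≥ ‖GᵀP_f G‖ and λ_k ≥ ‖GᵀΠ_{k+1}G‖ for all k = 0,…,N−2, then for every k = 0,…,N−1 the matrix M_k is invertible and Π_k is symmetric positive semidefinite; moreover Π_k ⪰ Q (so Π_k is positive definite) for every k = 0,…,N−1. -/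
open Matrix

/-- The block matrix `M_k = [[BᵀPB + R, BᵀPG],[GᵀPB, GᵀPG − λI]]`. -/
noncomputable def Mmat {n m q : ℕ} (B : Matrix (Fin n) (Fin m) ℝ) (G : Matrix (Fin n) (Fin q) ℝ)
    (R : Matrix (Fin m) (Fin m) ℝ) (P : Matrix (Fin n) (Fin n) ℝ) (lam : ℝ) :
    Matrix (Fin m ⊕ Fin q) (Fin m ⊕ Fin q) ℝ :=
  Matrix.fromBlocks (Bᵀ * P * B + R) (Bᵀ * P * G) (Gᵀ * P * B)
    (Gᵀ * P * G - lam • (1 : Matrix (Fin q) (Fin q) ℝ))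

/-- One step of the Riccati-type recursion:
`Q + AᵀPA − AᵀP[B G] M⁻¹ [B G]ᵀ PA`. -/
noncomputable def riccStep {n m q : ℕ} (A : Matrix (Fin n) (Fin n) ℝ)
    (B : Matrix (Fin n) (Fin m) ℝ) (G : Matrix (Fin n) (Fin q) ℝ)
    (Q : Matrix (Fin n) (Fin n) ℝ) (R : Matrix (Fin m) (Fin m) ℝ)
    (P : Matrix (Fin n) (Fin n) ℝ) (lam : ℝ) : Matrix (Fin n) (Fin n) ℝ :=
  Q + Aᵀ * P * A -
    Aᵀ * P * Matrix.fromCols B G * (Mmat B G R P lam)⁻¹ * (Matrix.fromCols B G)ᵀ * P * A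

/-- The backward recursion `Π_N = P_f`, `Π_k = riccStep(Π_{k+1}, λ_k)` for `k < N`. -/
noncomputable def PiSeq {n m q : ℕ} (A : Matrix (Fin n) (Fin n) ℝ)
    (B : Matrix (Fin n) (Fin m) ℝ) (G : Matrix (Fin n) (Fin q) ℝ)
    (Q : Matrix (Fin n) (Fin n) ℝ) (R : Matrix (Fin m) (Fin m) ℝ)
    (Pf : Matrix (Fin n) (Fin n) ℝ) (N : ℕ) (lam : Fin N → ℝ) (k : ℕ) :
    Matrix (Fin n) (Fin n) ℝ :=
  if h : N ≤ k then Pf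
  else riccStep A B G Q R (PiSeq A B G Q R Pf N lam (k + 1)) (lam ⟨k, by omega⟩)
termination_by N - k
decreasing_by omega

namespace StDARAux

lemma dotP_comm {n : ℕ} {P : Matrix (Fin n) (Fin n) ℝ} (hP : Pᵀ = P) (a b : Fin n → ℝ) :
    a ⬝ᵥ (P *ᵥ b) = b ⬝ᵥ (P *ᵥ a) := by
  rw [Matrix.dotProduct_mulVec, ← Matrix.mulVec_transpose, hP, dotProduct_comm]

lemma dot_t {a b : ℕ} (B : Matrix (Fin a) (Fin b) ℝ) (u : Fin b → ℝ) (s : Fin a → ℝ) :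
    u ⬝ᵥ (Bᵀ *ᵥ s) = (B *ᵥ u) ⬝ᵥ s := by
  rw [Matrix.dotProduct_mulVec, Matrix.vecMul_transpose]

lemma dot_quad {n a b : ℕ} (P : Matrix (Fin n) (Fin n) ℝ) (U : Matrix (Fin n) (Fin a) ℝ)
    (V : Matrix (Fin n) (Fin b) ℝ) (u : Fin a → ℝ) (v : Fin b → ℝ) :
    u ⬝ᵥ ((Uᵀ * P * V) *ᵥ v) = (U *ᵥ u) ⬝ᵥ (P *ᵥ (V *ᵥ v)) := by
  rw [← Matrix.mulVec_mulVec, ← Matrix.mulVec_mulVec, dot_t]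

lemma dot_self_nonneg {a : ℕ} (x : Fin a → ℝ) : 0 ≤ x ⬝ᵥ x :=
  Finset.sum_nonneg fun i _ => mul_self_nonneg (x i)

lemma dot_le_l2n {q : ℕ} (S : Matrix (Fin q) (Fin q) ℝ) (x : Fin q → ℝ) :
    x ⬝ᵥ (S *ᵥ x) ≤ l2n S * (x ⬝ᵥ x) := by
  set T := LinearMap.toContinuousLinearMap (Matrix.toEuclideanLin S) with hT
  set y : EuclideanSpace ℝ (Fin q) := (WithLp.equiv 2 (Fin q → ℝ)).symm x with hy
  have h1 : x ⬝ᵥ (S *ᵥ x) = inner ℝ y (T y) := by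
    rw [hy]
    show _ = inner ℝ (WithLp.toLp 2 x) (WithLp.toLp 2 (S *ᵥ x))
    rw [EuclideanSpace.inner_toLp_toLp]
    simp [dotProduct_comm]
  have h2 : x ⬝ᵥ x = ‖y‖ ^ 2 := by
    rw [← real_inner_self_eq_norm_sq, hy]
    show _ = inner ℝ (WithLp.toLp 2 x) (WithLp.toLp 2 x)
    rw [EuclideanSpace.inner_toLp_toLp]
    simp
  calc x ⬝ᵥ (S *ᵥ x) = inner ℝ y (T y) := h1
    _ ≤ ‖y‖ * ‖T y‖ := real_inner_le_norm y (T y)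
    _ ≤ ‖y‖ * (‖T‖ * ‖y‖) := mul_le_mul_of_nonneg_left (T.le_opNorm y) (norm_nonneg y)
    _ = ‖T‖ * ‖y‖ ^ 2 := by ring
    _ = l2n S * (x ⬝ᵥ x) := by rw [h2, l2n, hT]

lemma l2n_pos {a b : ℕ} {S : Matrix (Fin a) (Fin b) ℝ} (hS : S ≠ 0) : 0 < l2n S := by
  rw [l2n, norm_pos_iff]
  intro h
  apply hS
  have h1 : Matrix.toEuclideanLin S = 0 :=
    LinearMap.toContinuousLinearMap.injective (h.trans (map_zero _).symm)
  exact Matrix.toEuclideanLin.injective (h1.trans (map_zero _).symm)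

lemma GtPG_ne_zero {n q : ℕ} {P : Matrix (Fin n) (Fin n) ℝ} {G : Matrix (Fin n) (Fin q) ℝ}
    (hP : P.PosDef) (hG : G ≠ 0) : Gᵀ * P * G ≠ 0 := by
  intro h
  apply hG
  have hzero : ∀ v, G *ᵥ v = 0 := by
    intro v
    by_contra hv
    have hpos := hP.dotProduct_mulVec_pos hv
    have h2 : (G *ᵥ v) ⬝ᵥ (P *ᵥ (G *ᵥ v)) = v ⬝ᵥ ((Gᵀ * P * G) *ᵥ v) := (dot_quad P G G v v).symm
    rw [h] at h2
    simp only [Matrix.zero_mulVec, dotProduct_zero] at h2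
    simp only [star_trivial] at hpos
    linarith
  ext i j
  have := congrFun (hzero (Pi.single j 1)) i
  simpa [Matrix.mulVec_single] using this

lemma Mmat_isUnit {n m q : ℕ} (B : Matrix (Fin n) (Fin m) ℝ)
    (G : Matrix (Fin n) (Fin q) ℝ) (R : Matrix (Fin m) (Fin m) ℝ)
    (P : Matrix (Fin n) (Fin n) ℝ) (lam : ℝ)
    (hG : G ≠ 0)
    (hrange : LinearMap.range G.mulVecLin ≤ LinearMap.range B.mulVecLin)
    (hR : R.PosDef) (hP : P.PosDef)
    (hlam : l2n (Gᵀ * P * G) ≤ lam) : IsUnit (Mmat B G R P lam) := by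
  have hPt : Pᵀ = P := (Matrix.conjTranspose_eq_transpose_of_trivial P) ▸ hP.1
  have hlam0 : 0 < lam := lt_of_lt_of_le (l2n_pos (GtPG_ne_zero hP hG)) hlam
  have hker : ∀ v : Fin m ⊕ Fin q → ℝ, (Mmat B G R P lam) *ᵥ v = 0 → v = 0 := by
    intro v hv
    set u := v ∘ Sum.inl with hu'
    set w := v ∘ Sum.inr with hw'
    have hv' : v = Sum.elim u w := by funext i; cases i <;> rfl
    rw [hv', Mmat, Matrix.fromBlocks_mulVec] at hv
    have h1 : (Bᵀ * P * B + R) *ᵥ u + (Bᵀ * P * G) *ᵥ w = 0 := by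
      funext i; exact congrFun hv (Sum.inl i)
    have h2 : (Gᵀ * P * B) *ᵥ u + (Gᵀ * P * G - lam • (1 : Matrix (Fin q) (Fin q) ℝ)) *ᵥ w = 0 := by
      funext i; exact congrFun hv (Sum.inr i)
    have d1 := congrArg (fun t => u ⬝ᵥ t) h1
    have d2 := congrArg (fun t => w ⬝ᵥ t) h2
    simp only [Matrix.add_mulVec, Matrix.sub_mulVec, dotProduct_add,
      dotProduct_sub, dot_quad, dotProduct_zero,
      Matrix.smul_mulVec, Matrix.one_mulVec, dotProduct_smul,
      smul_eq_mul] at d1 d2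
    have hc1 : (B *ᵥ u) ⬝ᵥ (P *ᵥ (G *ᵥ w)) = (G *ᵥ w) ⬝ᵥ (P *ᵥ (B *ᵥ u)) :=
      dotP_comm hPt _ _
    have hbound : (G *ᵥ w) ⬝ᵥ (P *ᵥ (G *ᵥ w)) ≤ lam * (w ⬝ᵥ w) := by
      rw [← dot_quad]
      calc w ⬝ᵥ ((Gᵀ * P * G) *ᵥ w) ≤ l2n (Gᵀ * P * G) * (w ⬝ᵥ w) := dot_le_l2n _ _
        _ ≤ lam * (w ⬝ᵥ w) := mul_le_mul_of_nonneg_right hlam (dot_self_nonneg w)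
    have hBu : 0 ≤ (B *ᵥ u) ⬝ᵥ (P *ᵥ (B *ᵥ u)) := by
      simpa using hP.posSemidef.dotProduct_mulVec_nonneg (B *ᵥ u)
    have hu0 : u = 0 := by
      by_contra h
      have := hR.dotProduct_mulVec_pos h
      simp only [star_trivial] at this
      linarith
    rw [hu0] at h1 h2
    simp only [Matrix.mulVec_zero, zero_add] at h1 h2
    obtain ⟨s, hs⟩ := hrange (LinearMap.mem_range_self G.mulVecLin w)
    simp only [Matrix.mulVecLin_apply] at hs
    have hb0 : (G *ᵥ w) ⬝ᵥ (P *ᵥ (G *ᵥ w)) = 0 := by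
      have hx : s ⬝ᵥ ((Bᵀ * P * G) *ᵥ w) = 0 := by rw [h1, dotProduct_zero]
      rw [dot_quad, hs] at hx
      exact hx
    have hGw : G *ᵥ w = 0 := by
      by_contra h
      have := hP.dotProduct_mulVec_pos h
      simp only [star_trivial] at this
      linarith
    have h2' : (Gᵀ * P * G) *ᵥ w = Gᵀ *ᵥ (P *ᵥ (G *ᵥ w)) := by
      rw [Matrix.mulVec_mulVec, Matrix.mulVec_mulVec]
    have hw0 : w = 0 := by
      have := h2
      rw [Matrix.sub_mulVec, h2', hGw, Matrix.mulVec_zero, Matrix.mulVec_zero,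
        zero_sub, neg_eq_zero, Matrix.smul_mulVec, Matrix.one_mulVec] at this
      exact (smul_eq_zero.mp this).resolve_left (by positivity)
    rw [hv', hu0, hw0]
    ext (i | i) <;> rfl
  apply (Matrix.isUnit_iff_isUnit_det _).2
  rw [isUnit_iff_ne_zero]
  intro hdet
  obtain ⟨v, hvne, hveq⟩ := (Matrix.exists_mulVec_eq_zero_iff).2 hdet
  exact hvne (hker v hveq)

lemma step_psd {n m q : ℕ}
    (A : Matrix (Fin n) (Fin n) ℝ) (B : Matrix (Fin n) (Fin m) ℝ)
    (G : Matrix (Fin n) (Fin q) ℝ) (Q : Matrix (Fin n) (Fin n) ℝ)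
    (R : Matrix (Fin m) (Fin m) ℝ) (P : Matrix (Fin n) (Fin n) ℝ) (lam : ℝ)
    (hR : R.PosDef) (hP : P.PosDef)
    (hlam : l2n (Gᵀ * P * G) ≤ lam)
    (hMu : IsUnit (Mmat B G R P lam)) :
    (riccStep A B G Q R P lam - Q).PosSemidef := by
  have hPt : Pᵀ = P := (Matrix.conjTranspose_eq_transpose_of_trivial P) ▸ hP.1
  have hRt : Rᵀ = R := (Matrix.conjTranspose_eq_transpose_of_trivial R) ▸ hR.1
  have hdet : IsUnit (Mmat B G R P lam).det := (Matrix.isUnit_iff_isUnit_det _).1 hMu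
  set C := Matrix.fromCols B G with hC
  set Mm := Mmat B G R P lam with hMm
  have hMt : Mmᵀ = Mm := by
    rw [hMm, Mmat, Matrix.fromBlocks_transpose]
    simp [Matrix.transpose_add, Matrix.transpose_sub, Matrix.transpose_mul, hPt, hRt,
      Matrix.transpose_smul, Matrix.mul_assoc]
  have hMit : (Mm⁻¹)ᵀ = Mm⁻¹ := by rw [Matrix.transpose_nonsing_inv, hMt]
  have hPiQ : riccStep A B G Q R P lam - Q
      = Aᵀ * P * A - Aᵀ * P * C * Mm⁻¹ * Cᵀ * P * A := by
    rw [riccStep, ← hC, ← hMm]; abel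
  apply Matrix.PosSemidef.of_dotProduct_mulVec_nonneg
  · rw [Matrix.IsHermitian, Matrix.conjTranspose_eq_transpose_of_trivial, hPiQ]
    simp only [Matrix.transpose_sub, Matrix.transpose_mul, Matrix.transpose_transpose, hPt,
      hMit, Matrix.mul_assoc]
  · intro x
    simp only [star_trivial]
    rw [hPiQ]
    set y := A *ᵥ x with hy
    set z : Fin m ⊕ Fin q → ℝ := -(Mm⁻¹ *ᵥ (Cᵀ *ᵥ (P *ᵥ y))) with hz
    set u := z ∘ Sum.inl with hu'
    set w := z ∘ Sum.inr with hw'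
    have hzelim : Sum.elim u w = z := by funext i; cases i <;> rfl
    have hMz : Mm *ᵥ z = -(Cᵀ *ᵥ (P *ᵥ y)) := by
      rw [hz, Matrix.mulVec_neg, Matrix.mulVec_mulVec, Matrix.mul_nonsing_inv _ hdet,
        Matrix.one_mulVec]
    have hform : x ⬝ᵥ ((Aᵀ * P * A - Aᵀ * P * C * Mm⁻¹ * Cᵀ * P * A) *ᵥ x)
        = y ⬝ᵥ (P *ᵥ y) + y ⬝ᵥ (P *ᵥ (C *ᵥ z)) := by
      rw [Matrix.sub_mulVec, dotProduct_sub]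
      have p1 : x ⬝ᵥ ((Aᵀ * P * A) *ᵥ x) = y ⬝ᵥ (P *ᵥ y) := dot_quad P A A x x
      have p2 : x ⬝ᵥ ((Aᵀ * P * C * Mm⁻¹ * Cᵀ * P * A) *ᵥ x) = -(y ⬝ᵥ (P *ᵥ (C *ᵥ z))) := by
        have e : Aᵀ * P * C * Mm⁻¹ * Cᵀ * P * A = Aᵀ * (P * (C * (Mm⁻¹ * (Cᵀ * P)))) * A := by
          simp only [Matrix.mul_assoc]
        rw [e, dot_quad]
        rw [← Matrix.mulVec_mulVec (v := A *ᵥ x) (M := P),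
          ← Matrix.mulVec_mulVec (v := A *ᵥ x) (M := C),
          ← Matrix.mulVec_mulVec (v := A *ᵥ x) (M := Mm⁻¹),
          ← Matrix.mulVec_mulVec (v := A *ᵥ x) (M := Cᵀ)]
        rw [← hy]
        have : Mm⁻¹ *ᵥ (Cᵀ *ᵥ (P *ᵥ y)) = -z := by rw [hz, neg_neg]
        rw [this]
        simp [Matrix.mulVec_neg]
      rw [p1, p2]
      ring
    rw [hform]
    have hCz : C *ᵥ z = B *ᵥ u + G *ᵥ w := by
      rw [← hzelim, hC, Matrix.fromCols_mulVec_sumElim]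
    have hCt : Cᵀ *ᵥ (P *ᵥ y) = Sum.elim (Bᵀ *ᵥ (P *ᵥ y)) (Gᵀ *ᵥ (P *ᵥ y)) := by
      rw [hC, Matrix.transpose_fromCols, Matrix.fromRows_mulVec]
    have h2 : (Gᵀ * P * B) *ᵥ u + (Gᵀ * P * G - lam • (1 : Matrix (Fin q) (Fin q) ℝ)) *ᵥ w
        = -(Gᵀ *ᵥ (P *ᵥ y)) := by
      have := hMz
      rw [← hzelim, hMm, Mmat, Matrix.fromBlocks_mulVec, hCt] at this
      funext i; exact congrFun this (Sum.inr i)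
    have E1 := congrArg (fun t => Sum.elim u w ⬝ᵥ t) hMz
    rw [← hzelim] at E1
    rw [hMm, Mmat, Matrix.fromBlocks_mulVec, hCt] at E1
    simp only [sumElim_dotProduct_sumElim, Matrix.add_mulVec, Matrix.sub_mulVec,
      dotProduct_add, dotProduct_sub, dotProduct_neg, dot_quad, dot_t,
      Matrix.smul_mulVec, Matrix.one_mulVec, dotProduct_smul, smul_eq_mul,
      Sum.elim_comp_inl, Sum.elim_comp_inr] at E1
    have E2 := congrArg (fun t => w ⬝ᵥ t) h2
    simp only [Matrix.add_mulVec, Matrix.sub_mulVec, dotProduct_add,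
      dotProduct_sub, dotProduct_neg, dot_quad, dot_t,
      Matrix.smul_mulVec, Matrix.one_mulVec, dotProduct_smul, smul_eq_mul] at E2
    have egoal : y ⬝ᵥ (P *ᵥ (C *ᵥ z)) = y ⬝ᵥ (P *ᵥ (B *ᵥ u)) + y ⬝ᵥ (P *ᵥ (G *ᵥ w)) := by
      rw [hCz, Matrix.mulVec_add, dotProduct_add]
    have hf : 0 ≤ (y + B *ᵥ u) ⬝ᵥ (P *ᵥ (y + B *ᵥ u)) := by
      simpa using hP.posSemidef.dotProduct_mulVec_nonneg (y + B *ᵥ u)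
    have hfe : (y + B *ᵥ u) ⬝ᵥ (P *ᵥ (y + B *ᵥ u))
        = y ⬝ᵥ (P *ᵥ y) + y ⬝ᵥ (P *ᵥ (B *ᵥ u)) + (B *ᵥ u) ⬝ᵥ (P *ᵥ y)
          + (B *ᵥ u) ⬝ᵥ (P *ᵥ (B *ᵥ u)) := by
      rw [Matrix.mulVec_add, dotProduct_add, add_dotProduct,
        add_dotProduct]
      ring
    have hRu : 0 ≤ u ⬝ᵥ (R *ᵥ u) := by simpa using hR.posSemidef.dotProduct_mulVec_nonneg u
    have hbound : (G *ᵥ w) ⬝ᵥ (P *ᵥ (G *ᵥ w)) ≤ lam * (w ⬝ᵥ w) := by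
      rw [← dot_quad]
      calc w ⬝ᵥ ((Gᵀ * P * G) *ᵥ w) ≤ l2n (Gᵀ * P * G) * (w ⬝ᵥ w) := dot_le_l2n _ _
        _ ≤ lam * (w ⬝ᵥ w) := mul_le_mul_of_nonneg_right hlam (dot_self_nonneg w)
    have c1 : y ⬝ᵥ (P *ᵥ (B *ᵥ u)) = (B *ᵥ u) ⬝ᵥ (P *ᵥ y) := dotP_comm hPt _ _
    have c2 : y ⬝ᵥ (P *ᵥ (G *ᵥ w)) = (G *ᵥ w) ⬝ᵥ (P *ᵥ y) := dotP_comm hPt _ _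
    have c3 : (B *ᵥ u) ⬝ᵥ (P *ᵥ (G *ᵥ w)) = (G *ᵥ w) ⬝ᵥ (P *ᵥ (B *ᵥ u)) := dotP_comm hPt _ _
    rw [egoal]
    linarith [E1, E2, hf, hfe, hRu, hbound, c1, c2, c3]

lemma step_all {n m q : ℕ}
    (A : Matrix (Fin n) (Fin n) ℝ) (B : Matrix (Fin n) (Fin m) ℝ)
    (G : Matrix (Fin n) (Fin q) ℝ) (Q : Matrix (Fin n) (Fin n) ℝ)
    (R : Matrix (Fin m) (Fin m) ℝ) (P : Matrix (Fin n) (Fin n) ℝ) (lam : ℝ)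
    (hG : G ≠ 0)
    (hrange : LinearMap.range G.mulVecLin ≤ LinearMap.range B.mulVecLin)
    (hQ : Q.PosDef) (hR : R.PosDef) (hP : P.PosDef)
    (hlam : l2n (Gᵀ * P * G) ≤ lam) :
    IsUnit (Mmat B G R P lam) ∧ (riccStep A B G Q R P lam).PosSemidef ∧
      (riccStep A B G Q R P lam - Q).PosSemidef ∧ (riccStep A B G Q R P lam).PosDef := by
  have hMu := Mmat_isUnit B G R P lam hG hrange hR hP hlam
  have hpsd := step_psd A B G Q R P lam hR hP hlam hMu
  have hpd : (riccStep A B G Q R P lam).PosDef := by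
    have : riccStep A B G Q R P lam = Q + (riccStep A B G Q R P lam - Q) := by abel
    rw [this]
    exact hQ.add_posSemidef hpsd
  exact ⟨hMu, hpd.posSemidef, hpsd, hpd⟩

end StDARAux

/-- **Well-posedness and positive definiteness of the finite-horizon StDAR recursion.**
Under the stated hypotheses on the data and the multipliers, every `M_k` is invertible,
every `Π_k` is symmetric positive semidefinite, `Π_k ⪰ Q`, and hence `Π_k` is positive
definite, for all `k = 0,…,N−1`. -/
theorem StDAR_recursion_wellposed {n m q N : ℕ} (hN : 1 ≤ N)
    (A : Matrix (Fin n) (Fin n) ℝ) (B : Matrix (Fin n) (Fin m) ℝ)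
    (G : Matrix (Fin n) (Fin q) ℝ)
    (Q Pf : Matrix (Fin n) (Fin n) ℝ) (R : Matrix (Fin m) (Fin m) ℝ)
    (hG : G ≠ 0)
    (hrange : LinearMap.range G.mulVecLin ≤ LinearMap.range B.mulVecLin)
    (hQ : Q.PosDef) (hR : R.PosDef) (hPf : Pf.PosDef)
    (lam : Fin N → ℝ)
    (hlamN : l2n (Gᵀ * Pf * G) ≤ lam ⟨N - 1, by omega⟩)
    (hlamk : ∀ k : ℕ, (hk : k + 2 ≤ N) →
      l2n (Gᵀ * PiSeq A B G Q R Pf N lam (k + 1) * G) ≤ lam ⟨k, by omega⟩) :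
    ∀ k : ℕ, (hk : k < N) →
      IsUnit (Mmat B G R (PiSeq A B G Q R Pf N lam (k + 1)) (lam ⟨k, by omega⟩)) ∧
      (PiSeq A B G Q R Pf N lam k).PosSemidef ∧
      (PiSeq A B G Q R Pf N lam k - Q).PosSemidef ∧
      (PiSeq A B G Q R Pf N lam k).PosDef := by
  have key : ∀ d k, (hk : k < N) → (hd : N - k ≤ d) →
      IsUnit (Mmat B G R (PiSeq A B G Q R Pf N lam (k + 1)) (lam ⟨k, by omega⟩)) ∧
      (PiSeq A B G Q R Pf N lam k).PosSemidef ∧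
      (PiSeq A B G Q R Pf N lam k - Q).PosSemidef ∧
      (PiSeq A B G Q R Pf N lam k).PosDef := by
    intro d
    induction d with
    | zero => intro k hk hd; exfalso; omega
    | succ d ih =>
      intro k hk hd
      have hP1 : (PiSeq A B G Q R Pf N lam (k + 1)).PosDef := by
        by_cases h : N ≤ k + 1
        · rw [PiSeq, dif_pos h]; exact hPf
        · exact (ih (k + 1) (by omega) (by omega)).2.2.2
      have hlam' : l2n (Gᵀ * PiSeq A B G Q R Pf N lam (k + 1) * G) ≤ lam ⟨k, by omega⟩ := by
        by_cases h : N ≤ k + 1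
        · have hk1 : k = N - 1 := by omega
          subst hk1
          have hqe : PiSeq A B G Q R Pf N lam (N - 1 + 1) = Pf := by
            rw [PiSeq, dif_pos (by omega)]
          rw [hqe]
          exact hlamN
        · exact hlamk k (by omega)
      obtain ⟨hMu, hps, hpsq, hpd⟩ :=
        StDARAux.step_all A B G Q R (PiSeq A B G Q R Pf N lam (k + 1)) (lam ⟨k, by omega⟩)
          hG hrange hQ hR hP1 hlam'
      have hunf : PiSeq A B G Q R Pf N lam k
          = riccStep A B G Q R (PiSeq A B G Q R Pf N lam (k + 1)) (lam ⟨k, by omega⟩) := by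
        rw [PiSeq, dif_neg (by omega : ¬ N ≤ k)]
      rw [hunf]
      exact ⟨hMu, hps, hpsq, hpd⟩
  intro k hk
  exact key (N - k) k hk (by omega)
end

section
/- Let A be n×n, B n×m, G n×q real matrices, Q an n×n real symmetric positive semidefinite matrix, R an m×m real symmetric positive definite matrix, Π an n×n real symmetric positive semidefinite matrix, and λ ∈ ℝ such that both the block matrix M(λ) = [[BᵀΠB + R, BᵀΠG],[GᵀΠB, GᵀΠG − λI]] and the matrix GᵀΠG − λI are invertible. Let K ∈ ℝ^{m×n} and J ∈ ℝ^{q×n} be the unique solution of M(λ)·[K; J] = −[BᵀΠA; GᵀΠA] (stacked blocks). Then Q + AᵀΠA − AᵀΠ[B G] M(λ)⁻¹ [B G]ᵀ ΠA = Q̄ + ĀᵀΠĀ − ĀᵀΠG(GᵀΠG − λI)⁻¹GᵀΠĀ, where Ā = A + BK and Q̄ = Q + KᵀRK. -/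
open Matrix

/-- **Riccati equality (closed-loop rewriting).**
If `M(λ) = [[BᵀΠB + R, BᵀΠG],[GᵀΠB, GᵀΠG − λI]]` and `GᵀΠG − λI` are invertible and
`(K; J)` is the solution of `M(λ)·[K; J] = −[BᵀΠA; GᵀΠA]`, then
`Q + AᵀΠA − AᵀΠ[B G] M(λ)⁻¹ [B G]ᵀ ΠA
  = Q̄ + ĀᵀΠĀ − ĀᵀΠG(GᵀΠG − λI)⁻¹GᵀΠĀ`
with `Ā = A + BK` and `Q̄ = Q + KᵀRK`. -/
theorem riccati_equality {n m q : ℕ}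
    (A : Matrix (Fin n) (Fin n) ℝ) (B : Matrix (Fin n) (Fin m) ℝ)
    (G : Matrix (Fin n) (Fin q) ℝ)
    (Q : Matrix (Fin n) (Fin n) ℝ) (R : Matrix (Fin m) (Fin m) ℝ)
    (Pm : Matrix (Fin n) (Fin n) ℝ) (lam : ℝ)
    (hQ : Q.PosSemidef) (hR : R.PosDef) (hPm : Pm.PosSemidef)
    (hM : IsUnit (Matrix.fromBlocks (Bᵀ * Pm * B + R) (Bᵀ * Pm * G) (Gᵀ * Pm * B)
      (Gᵀ * Pm * G - lam • (1 : Matrix (Fin q) (Fin q) ℝ))))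
    (hMq : IsUnit (Gᵀ * Pm * G - lam • (1 : Matrix (Fin q) (Fin q) ℝ)))
    (K : Matrix (Fin m) (Fin n) ℝ) (J : Matrix (Fin q) (Fin n) ℝ)
    (hKJ : Matrix.fromBlocks (Bᵀ * Pm * B + R) (Bᵀ * Pm * G) (Gᵀ * Pm * B)
        (Gᵀ * Pm * G - lam • (1 : Matrix (Fin q) (Fin q) ℝ)) *
        Matrix.fromRows K J = -Matrix.fromRows (Bᵀ * Pm * A) (Gᵀ * Pm * A)) :
    Q + Aᵀ * Pm * A -
      Aᵀ * Pm * Matrix.fromCols B G *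
        (Matrix.fromBlocks (Bᵀ * Pm * B + R) (Bᵀ * Pm * G) (Gᵀ * Pm * B)
          (Gᵀ * Pm * G - lam • (1 : Matrix (Fin q) (Fin q) ℝ)))⁻¹ *
        (Matrix.fromCols B G)ᵀ * Pm * A =
    (Q + Kᵀ * R * K) + (A + B * K)ᵀ * Pm * (A + B * K) -
      (A + B * K)ᵀ * Pm * G *
        (Gᵀ * Pm * G - lam • (1 : Matrix (Fin q) (Fin q) ℝ))⁻¹ * Gᵀ * Pm * (A + B * K) := by
  set S := Gᵀ * Pm * G - lam • (1 : Matrix (Fin q) (Fin q) ℝ) with hS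
  set M := Matrix.fromBlocks (Bᵀ * Pm * B + R) (Bᵀ * Pm * G) (Gᵀ * Pm * B) S with hMdef
  have hdet : IsUnit M.det := (Matrix.isUnit_iff_isUnit_det _).mp hM
  have hdetS : IsUnit S.det := (Matrix.isUnit_iff_isUnit_det _).mp hMq
  rw [Matrix.fromBlocks_mul_fromRows] at hKJ
  rw [show -Matrix.fromRows (Bᵀ * Pm * A) (Gᵀ * Pm * A)
      = Matrix.fromRows (-(Bᵀ * Pm * A)) (-(Gᵀ * Pm * A)) by
    ext (i|i) j <;> simp] at hKJ
  obtain ⟨e1, e2⟩ := Matrix.fromRows_inj hKJ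
  have hinv : M⁻¹ * Matrix.fromRows (Bᵀ * Pm * A) (Gᵀ * Pm * A) = -Matrix.fromRows K J := by
    have h := congrArg (fun X => M⁻¹ * X)
      (show M * Matrix.fromRows K J = -Matrix.fromRows (Bᵀ * Pm * A) (Gᵀ * Pm * A) by
        rw [hMdef, Matrix.fromBlocks_mul_fromRows]
        ext (i|i) j <;> simp [e1, e2])
    simp only [← Matrix.mul_assoc, Matrix.nonsing_inv_mul M hdet, Matrix.one_mul,
      Matrix.mul_neg] at h
    rw [h, neg_neg]
  have hJ : S⁻¹ * (Gᵀ * Pm * (A + B * K)) = -J := by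
    have h2 : S * J = -(Gᵀ * Pm * (A + B * K)) := by
      have hx : Gᵀ * Pm * (A + B * K) = Gᵀ * Pm * A + Gᵀ * Pm * B * K := by
        rw [Matrix.mul_add, Matrix.mul_assoc (Gᵀ * Pm) B K]
      rw [hx, neg_add, ← e2]
      abel
    have h := congrArg (fun X => S⁻¹ * X) h2
    simp only [← Matrix.mul_assoc, Matrix.nonsing_inv_mul S hdetS, Matrix.one_mul,
      Matrix.mul_neg] at h
    rw [h, neg_neg]
    simp only [Matrix.mul_assoc]
  have hrows : Matrix.fromRows Bᵀ Gᵀ * Pm * A = Matrix.fromRows (Bᵀ * Pm * A) (Gᵀ * Pm * A) := by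
    rw [Matrix.fromRows_mul, Matrix.fromRows_mul]
  have key : Aᵀ * Pm * Matrix.fromCols B G * M⁻¹ * (Matrix.fromCols B G)ᵀ * Pm * A
      = -(Aᵀ * Pm * (B * K + G * J)) := by
    rw [Matrix.transpose_fromCols]
    calc Aᵀ * Pm * Matrix.fromCols B G * M⁻¹ * Matrix.fromRows Bᵀ Gᵀ * Pm * A
        = Aᵀ * Pm * (Matrix.fromCols B G *
            (M⁻¹ * (Matrix.fromRows Bᵀ Gᵀ * Pm * A))) := by
          simp only [Matrix.mul_assoc]
      _ = -(Aᵀ * Pm * (B * K + G * J)) := by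
          rw [hrows, hinv, Matrix.mul_neg, Matrix.fromCols_mul_fromRows, Matrix.mul_neg]
  have key2 : (A + B * K)ᵀ * Pm * G * S⁻¹ * Gᵀ * Pm * (A + B * K)
      = -((A + B * K)ᵀ * Pm * G * J) := by
    calc (A + B * K)ᵀ * Pm * G * S⁻¹ * Gᵀ * Pm * (A + B * K)
        = (A + B * K)ᵀ * Pm * G * (S⁻¹ * (Gᵀ * Pm * (A + B * K))) := by
          simp only [Matrix.mul_assoc]
      _ = -((A + B * K)ᵀ * Pm * G * J) := by rw [hJ, Matrix.mul_neg]
  rw [key, key2]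
  have e1' := congrArg (fun X => Kᵀ * X) e1
  simp only [Matrix.mul_add, Matrix.add_mul, Matrix.mul_assoc, Matrix.mul_neg] at e1'
  simp only [sub_neg_eq_add, Matrix.transpose_add, Matrix.transpose_mul,
    Matrix.mul_add, Matrix.add_mul, Matrix.mul_assoc]
  linear_combination (norm := abel) -e1'
end

section
/- Let D be an n×n real symmetric positive semidefinite matrix and d ∈ ℝⁿ. Define V(w) = ½wᵀDw + wᵀd and, for real λ with λ > ‖D‖ (so that D − λI is negative definite and invertible), define g(λ) = −½ dᵀ(D − λI)⁻¹ d + λ/2. Then the maximum of V over the unit sphere {w ∈ ℝⁿ : ‖w‖ = 1} is attained, and max_{‖w‖=1} V(w) = inf_{λ > ‖D‖} g(λ). -/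
open Matrix

section SQSD_Aux

set_option maxHeartbeats 1000000

variable {n : ℕ}

private lemma sqsd_dotSym {M : Matrix (Fin n) (Fin n) ℝ} (h : Mᵀ = M) (x y : Fin n → ℝ) :
    x ⬝ᵥ M.mulVec y = y ⬝ᵥ M.mulVec x := by
  rw [Matrix.dotProduct_mulVec, ← Matrix.mulVec_transpose, h]
  exact dotProduct_comm _ _

private lemma sqsd_quad_expand {M : Matrix (Fin n) (Fin n) ℝ} (h : Mᵀ = M) (a b : Fin n → ℝ) :
    (a + b) ⬝ᵥ M.mulVec (a + b) =
      a ⬝ᵥ M.mulVec a + 2 * (a ⬝ᵥ M.mulVec b) + b ⬝ᵥ M.mulVec b := by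
  simp only [Matrix.mulVec_add, dotProduct_add, add_dotProduct]
  rw [sqsd_dotSym h b a]; ring

private lemma sqsd_smul_quad (M : Matrix (Fin n) (Fin n) ℝ) (s t : ℝ) (a b : Fin n → ℝ) :
    (s • a) ⬝ᵥ M.mulVec (t • b) = s * t * (a ⬝ᵥ M.mulVec b) := by
  simp only [Matrix.mulVec_smul, smul_dotProduct, dotProduct_smul, smul_eq_mul]
  ring

private lemma sqsd_sq_sum_eq (a : Fin n → ℝ) : ∑ i, a i ^ 2 = a ⬝ᵥ a := by
  simp [dotProduct, sq]

private lemma sqsd_dot_self_nonneg (a : Fin n → ℝ) : 0 ≤ a ⬝ᵥ a :=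
  Finset.sum_nonneg fun _ _ => mul_self_nonneg _

private lemma sqsd_psd_cs {M : Matrix (Fin n) (Fin n) ℝ} (hsym : Mᵀ = M)
    (hpsd : ∀ x : Fin n → ℝ, 0 ≤ x ⬝ᵥ M.mulVec x) (a b : Fin n → ℝ) :
    (a ⬝ᵥ M.mulVec b) ^ 2 ≤ (a ⬝ᵥ M.mulVec a) * (b ⬝ᵥ M.mulVec b) := by
  set A := a ⬝ᵥ M.mulVec a with hA
  set B := a ⬝ᵥ M.mulVec b with hB
  set C := b ⬝ᵥ M.mulVec b with hC
  have hA0 : 0 ≤ A := hpsd a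
  have hC0 : 0 ≤ C := hpsd b
  have key : ∀ s t : ℝ, 0 ≤ s^2 * A + 2*(s*t*B) + t^2 * C := by
    intro s t
    have := hpsd (s • a + t • b)
    rwa [sqsd_quad_expand hsym, sqsd_smul_quad, sqsd_smul_quad, sqsd_smul_quad, ← hA, ← hB, ← hC,
      show s*s*A = s^2*A by ring, show t*t*C = t^2*C by ring] at this
  rcases lt_or_eq_of_le hC0 with hC1 | hC1
  · have := key C (-B)
    have h2 : 0 ≤ C * (C * A - B^2) := by nlinarith
    nlinarith
  · rcases lt_or_eq_of_le hA0 with hA1 | hA1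
    · have := key (-B) A
      nlinarith
    · have k1 := key 1 1
      have k2 := key 1 (-1)
      nlinarith

private lemma sqsd_norm_sq_eq (x : Fin n → ℝ) :
    ‖(WithLp.equiv 2 (Fin n → ℝ)).symm x‖ ^ 2 = x ⬝ᵥ x := by
  rw [EuclideanSpace.norm_eq]
  rw [Real.sq_sqrt (Finset.sum_nonneg fun _ _ => sq_nonneg _)]
  simp [dotProduct, sq]

private lemma sqsd_clm_apply (M : Matrix (Fin n) (Fin n) ℝ) (x : Fin n → ℝ) :
    (LinearMap.toContinuousLinearMap (Matrix.toEuclideanLin M)) ((WithLp.equiv 2 (Fin n → ℝ)).symm x)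
      = (WithLp.equiv 2 (Fin n → ℝ)).symm (M.mulVec x) := by
  simp [LinearMap.coe_toContinuousLinearMap', Matrix.toEuclideanLin_apply_piLp_toLp, WithLp.equiv_symm_apply]

private lemma sqsd_l2n_rayleigh (M : Matrix (Fin n) (Fin n) ℝ) (x : Fin n → ℝ) :
    x ⬝ᵥ M.mulVec x ≤ l2n M * (x ⬝ᵥ x) := by
  set X := (WithLp.equiv 2 (Fin n → ℝ)).symm x with hX
  set T := LinearMap.toContinuousLinearMap (Matrix.toEuclideanLin M) with hT
  have h1 : x ⬝ᵥ M.mulVec x = inner ℝ (T X) X := by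
    rw [hT, hX, sqsd_clm_apply, PiLp.inner_apply]
    simp [dotProduct, WithLp.equiv_symm_apply, mul_comm]
  rw [h1]
  calc inner ℝ (T X) X ≤ ‖T X‖ * ‖X‖ := real_inner_le_norm _ _
    _ ≤ (‖T‖ * ‖X‖) * ‖X‖ := by
        have := T.le_opNorm X
        nlinarith [norm_nonneg (T X), norm_nonneg X]
    _ = l2n M * (x ⬝ᵥ x) := by
        rw [mul_assoc, ← sq, hX, sqsd_norm_sq_eq]; rfl

private lemma sqsd_l2n_le {M : Matrix (Fin n) (Fin n) ℝ} {lam : ℝ} (hlam : 0 ≤ lam)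
    (h : ∀ x : Fin n → ℝ, (M.mulVec x) ⬝ᵥ (M.mulVec x) ≤ lam ^ 2 * (x ⬝ᵥ x)) :
    l2n M ≤ lam := by
  apply ContinuousLinearMap.opNorm_le_bound _ hlam
  intro X
  have hX : X = (WithLp.equiv 2 (Fin n → ℝ)).symm ((WithLp.equiv 2 (Fin n → ℝ)) X) := rfl
  set x := (WithLp.equiv 2 (Fin n → ℝ)) X with hx
  have h1 : ‖(LinearMap.toContinuousLinearMap (Matrix.toEuclideanLin M)) X‖ ^ 2
      = (M.mulVec x) ⬝ᵥ (M.mulVec x) := by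
    rw [hX, sqsd_clm_apply, sqsd_norm_sq_eq]
  have h2 : ‖X‖ ^ 2 = x ⬝ᵥ x := by rw [hX, sqsd_norm_sq_eq]
  have h4 : ‖(LinearMap.toContinuousLinearMap (Matrix.toEuclideanLin M)) X‖ ^ 2 ≤ (lam * ‖X‖)^2 := by
    rw [mul_pow, h1, h2]; exact h x
  have h5 : (0:ℝ) ≤ lam * ‖X‖ := mul_nonneg hlam (norm_nonneg _)
  nlinarith [norm_nonneg ((LinearMap.toContinuousLinearMap (Matrix.toEuclideanLin M)) X)]

private lemma sqsd_l2n_le_lam (hn : 0 < n) {M : Matrix (Fin n) (Fin n) ℝ} (hsym : Mᵀ = M)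
    (hpsd : ∀ x : Fin n → ℝ, 0 ≤ x ⬝ᵥ M.mulVec x) {lam : ℝ}
    (hub : ∀ x : Fin n → ℝ, x ⬝ᵥ M.mulVec x ≤ lam * (x ⬝ᵥ x)) :
    l2n M ≤ lam := by
  have hlam : 0 ≤ lam := by
    have h1 := hpsd (Pi.single ⟨0, hn⟩ 1)
    have h2 := hub (Pi.single ⟨0, hn⟩ 1)
    have h3 : (Pi.single ⟨0, hn⟩ 1 : Fin n → ℝ) ⬝ᵥ (Pi.single ⟨0, hn⟩ 1) = 1 := by
      simp [dotProduct, Pi.single_apply]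
    rw [h3, mul_one] at h2
    linarith
  apply sqsd_l2n_le hlam
  intro x
  set v := M.mulVec x with hv
  have hq : x ⬝ᵥ M.mulVec v = v ⬝ᵥ v := by
    rw [sqsd_dotSym hsym x v, hv, Matrix.dotProduct_mulVec, ← Matrix.mulVec_transpose, hsym]
  have hcs := sqsd_psd_cs hsym hpsd x v
  rw [hq] at hcs
  have h5 := hub v
  have h6 := hub x
  have h7 := hpsd x
  have h8 := sqsd_dot_self_nonneg v
  have h9 := sqsd_dot_self_nonneg x
  rcases eq_or_lt_of_le h8 with h10 | h10
  · nlinarith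
  · nlinarith [mul_le_mul_of_nonneg_right h6 (le_of_lt h10)]

private lemma sqsd_exists_max (hn : 0 < n) (D : Matrix (Fin n) (Fin n) ℝ) (d : Fin n → ℝ) :
    ∃ w : Fin n → ℝ, (∑ i, w i ^ 2 = 1) ∧
      ∀ v : Fin n → ℝ, ∑ i, v i ^ 2 = 1 →
        (1 / 2) * (v ⬝ᵥ D.mulVec v) + v ⬝ᵥ d ≤ (1 / 2) * (w ⬝ᵥ D.mulVec w) + w ⬝ᵥ d := by
  set S : Set (Fin n → ℝ) := {w | ∑ i, w i ^ 2 = 1} with hS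
  have hcont : Continuous (fun w : Fin n → ℝ => ∑ i, w i ^ 2) := by
    apply continuous_finset_sum
    intro i _
    exact (continuous_apply i).pow 2
  have hclosed : IsClosed S := isClosed_eq hcont continuous_const
  have hbdd : Bornology.IsBounded S := by
    apply Bornology.IsBounded.subset (Metric.isBounded_closedBall (x := (0 : Fin n → ℝ)) (r := 1))
    intro w hw
    simp only [Metric.mem_closedBall, dist_zero_right]
    rw [pi_norm_le_iff_of_nonneg zero_le_one]
    intro i
    have h1 : w i ^ 2 ≤ 1 := by
      have := Finset.single_le_sum (f := fun j => w j ^ 2) (fun j _ => sq_nonneg _)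
        (Finset.mem_univ i)
      rw [hw] at this; simpa using this
    rw [Real.norm_eq_abs, ← Real.sqrt_one, ← Real.sqrt_sq_eq_abs]
    exact Real.sqrt_le_sqrt (by linarith)
  have hcomp : IsCompact S := Metric.isCompact_of_isClosed_isBounded hclosed hbdd
  have hne : S.Nonempty := by
    refine ⟨Pi.single ⟨0, hn⟩ 1, ?_⟩
    simp only [hS, Set.mem_setOf_eq, Pi.single_apply]
    rw [Finset.sum_eq_single ⟨0, hn⟩] <;> simp +contextual
  have hVcont : Continuous (fun w : Fin n → ℝ => (1 / 2) * (w ⬝ᵥ D.mulVec w) + w ⬝ᵥ d) := by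
    simp only [dotProduct, Matrix.mulVec]
    apply Continuous.add
    · apply Continuous.mul continuous_const
      apply continuous_finset_sum; intro i _
      exact (continuous_apply i).mul (by
        apply continuous_finset_sum; intro j _
        exact continuous_const.mul (continuous_apply j))
    · apply continuous_finset_sum; intro i _
      exact (continuous_apply i).mul continuous_const
  obtain ⟨w, hwS, hmax⟩ := hcomp.exists_isMaxOn hne hVcont.continuousOn
  exact ⟨w, hwS, fun v hv => hmax hv⟩

private lemma sqsd_kkt {D : Matrix (Fin n) (Fin n) ℝ} {d : Fin n → ℝ} (hsym : Dᵀ = D)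
    (hpsd : ∀ x : Fin n → ℝ, 0 ≤ x ⬝ᵥ D.mulVec x)
    {w : Fin n → ℝ} (hw : w ⬝ᵥ w = 1)
    (hmax : ∀ v : Fin n → ℝ, v ⬝ᵥ v = 1 →
      (1 / 2) * (v ⬝ᵥ D.mulVec v) + v ⬝ᵥ d ≤ (1 / 2) * (w ⬝ᵥ D.mulVec w) + w ⬝ᵥ d) :
    D.mulVec w + d = ((D.mulVec w + d) ⬝ᵥ w) • w := by
  set lam := (D.mulVec w + d) ⬝ᵥ w with hlam
  set r := D.mulVec w + d - lam • w with hr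
  by_contra hne
  have hrne : r ≠ 0 := fun h => hne (by rwa [sub_eq_zero] at h)
  have hρ2 : 0 < r ⬝ᵥ r := by
    rcases lt_or_eq_of_le (Finset.sum_nonneg fun i _ => mul_self_nonneg (r i)) with h | h
    · exact h
    · exact absurd (dotProduct_self_eq_zero.mp h.symm) hrne
  set ρ := Real.sqrt (r ⬝ᵥ r) with hρdef
  have hρpos : 0 < ρ := Real.sqrt_pos.mpr hρ2
  have hρsq : ρ * ρ = r ⬝ᵥ r := Real.mul_self_sqrt (le_of_lt hρ2)
  set rh := ρ⁻¹ • r with hrh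
  -- basic facts
  have hrw : r ⬝ᵥ w = 0 := by
    rw [hr, sub_dotProduct, smul_dotProduct, hw]
    simp [hlam]
  have hrhw : rh ⬝ᵥ w = 0 := by rw [hrh, smul_dotProduct, hrw]; simp
  have hwrh : w ⬝ᵥ rh = 0 := by rw [dotProduct_comm]; exact hrhw
  have hrhrh : rh ⬝ᵥ rh = 1 := by
    rw [hrh]
    simp only [smul_dotProduct, dotProduct_smul, smul_eq_mul]
    rw [← hρsq]
    field_simp
  -- scalar abbreviations
  set a := w ⬝ᵥ D.mulVec w with ha
  set b := rh ⬝ᵥ D.mulVec w with hb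
  set e := rh ⬝ᵥ D.mulVec rh with he
  set p := w ⬝ᵥ d with hp
  set t := rh ⬝ᵥ d with ht
  have ha0 : 0 ≤ a := hpsd w
  have he0 : 0 ≤ e := hpsd rh
  have hbt : b + t = ρ := by
    have h1 : rh ⬝ᵥ r = ρ := by
      rw [hrh]
      simp only [smul_dotProduct, smul_eq_mul]
      rw [← hρsq]; field_simp
    rw [hr] at h1
    simp only [dotProduct_sub, dotProduct_add, dotProduct_smul,
      smul_eq_mul] at h1
    rw [show rh ⬝ᵥ w = 0 from hrhw] at h1
    simp only [mul_zero, sub_zero] at h1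
    rw [← h1, hb, ht]
  clear_value a b e p t rh ρ r lam
  -- the key inequality for each small s
  have key : ∀ s : ℝ, 0 < s → s ≤ 1 →
      s * (Real.sqrt (1 - s^2) * ρ + (1 - Real.sqrt (1 - s^2)) * t) ≤
        (1/2) * s^2 * (a - e) + (1 - Real.sqrt (1 - s^2)) * p := by
    intro s hs0 hs1
    set c := Real.sqrt (1 - s^2) with hc
    have hc0 : 0 ≤ c := Real.sqrt_nonneg _
    have hcsq : c^2 = 1 - s^2 := Real.sq_sqrt (by nlinarith)
    set v := c • w + s • rh with hv
    have hvv : v ⬝ᵥ v = 1 := by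
      rw [hv]
      simp only [add_dotProduct, dotProduct_add, smul_dotProduct,
        dotProduct_smul, smul_eq_mul, hw, hrhrh, hwrh, hrhw]
      nlinarith
    have hopt := hmax v hvv
    have hvDv : v ⬝ᵥ D.mulVec v = c^2 * a + 2*(c*s*b) + s^2*e := by
      rw [hv, sqsd_quad_expand hsym, sqsd_smul_quad, sqsd_smul_quad, sqsd_smul_quad, sqsd_dotSym hsym w rh,
        ← ha, ← hb, ← he]
      ring
    have hvd : v ⬝ᵥ d = c * p + s * t := by
      rw [hv]
      simp only [add_dotProduct, smul_dotProduct, smul_eq_mul, ← hp, ← ht]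
    rw [hvDv, hvd] at hopt
    have hbρ : b = ρ - t := by linarith [hbt]
    rw [hbρ] at hopt
    nlinarith [hopt, hcsq]
  -- reduce to clean inequality (1-s^2)*ρ ≤ s*K
  obtain ⟨K, hK1, hKb⟩ : ∃ K : ℝ, 1 ≤ K ∧ (1/2)*a + |p| + |t| ≤ K :=
    ⟨(1/2)*a + |p| + |t| + 1, by nlinarith [abs_nonneg p, abs_nonneg t, ha0], by linarith⟩
  have key2 : ∀ s : ℝ, 0 < s → s ≤ 1 → (1 - s^2) * ρ ≤ s * K := by
    intro s hs0 hs1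
    have hkey := key s hs0 hs1
    set c := Real.sqrt (1 - s^2) with hc
    have hc0 : 0 ≤ c := Real.sqrt_nonneg _
    have hcsq : c^2 = 1 - s^2 := Real.sq_sqrt (by nlinarith)
    have hc1 : c ≤ 1 := by nlinarith
    have hclb : 1 - s^2 ≤ c := by
      have h2 : (1 - s^2)^2 ≤ 1 - s^2 := by nlinarith
      nlinarith
    have h1c : 1 - c ≤ s^2 := by linarith
    have hstep : s * ((1 - s^2) * ρ) ≤ s * (s * K) := by
      have e1 : s * ((1-s^2) * ρ) ≤ s * (c * ρ) := by
        have := mul_le_mul_of_nonneg_right hclb (le_of_lt hρpos)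
        nlinarith
      have e2 : s * (c * ρ) = s * (c*ρ + (1-c)*t) - s * ((1-c)*t) := by ring
      have e3 : - (s * ((1-c)*t)) ≤ s * (s^2 * |t|) := by
        have ht1 : -(|t|) ≤ t := neg_abs_le t
        have h2 : 0 ≤ 1 - c := by linarith
        nlinarith [mul_nonneg (mul_nonneg hs0.le h2) (by linarith : (0:ℝ) ≤ t + |t|),
          mul_nonneg (mul_nonneg hs0.le (by linarith : (0:ℝ) ≤ s^2 - (1-c))) (abs_nonneg t)]
      have e4 : (1-c) * p ≤ s^2 * |p| := by
        have h1 : p ≤ |p| := le_abs_self p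
        have h2 : 0 ≤ 1 - c := by linarith
        nlinarith [abs_nonneg p]
      have e5 : (1/2) * s^2 * (a - e) ≤ (1/2) * s^2 * a := by nlinarith
      have e6 : s * (s^2 * |t|) ≤ s * (s * |t|) := by
        nlinarith [mul_nonneg (mul_nonneg (mul_nonneg hs0.le hs0.le)
          (by linarith : (0:ℝ) ≤ 1 - s)) (abs_nonneg t)]
      have e7 : s^2 * |p| ≤ s * (s * |p|) := by ring_nf; rfl
      have e8 : (1/2) * s^2 * a = s * (s * ((1/2)*a)) := by ring
      have combo : s * ((1-s^2) * ρ) ≤ s * (s * ((1/2)*a)) + s * (s * |p|) + s * (s * |t|) := by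
        linarith [e1, e2, e3, e4, e5, e6, e7, e8, hkey]
      have e9 : s * (s * ((1/2)*a)) + s * (s * |p|) + s * (s * |t|) ≤ s * (s * K) := by
        have h9 : s * s * ((1/2)*a + |p| + |t|) ≤ s * s * K :=
          mul_le_mul_of_nonneg_left hKb (by positivity)
        linarith [h9]
      linarith
    exact le_of_mul_le_mul_left hstep hs0
  -- contradiction
  clear key hr hrh hρdef hρsq hrw hρ2 hrne hne hlam hb he ht hp ha hbt hmax hpsd hsym hw ha0 he0 hrhw hwrh hrhrh hKb
  clear r rh lam a b e p t d D w
  have hKpos : (0:ℝ) < K := by linarith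
  set s := min (1/2 : ℝ) (ρ / (2 * K)) with hs
  clear_value s
  have hs0 : 0 < s := by
    rw [hs]; exact lt_min (by norm_num) (div_pos hρpos (by linarith))
  have hs12 : s ≤ 1/2 := by rw [hs]; exact min_le_left _ _
  have hsr : s ≤ ρ / (2*K) := by rw [hs]; exact min_le_right _ _
  have h1 := key2 s hs0 (by linarith)
  have h2 : s * K ≤ ρ / 2 := by
    have := mul_le_mul_of_nonneg_right hsr (le_of_lt hKpos)
    rw [div_mul_eq_mul_div, mul_comm (2:ℝ) K, ← div_div, mul_div_assoc] at this
    rw [div_self (ne_of_gt hKpos)] at this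
    simpa using this
  have hs4 : s^2 ≤ 1/4 := by nlinarith [hs0, hs12]
  have h3 : (3/4 : ℝ) * ρ ≤ (1 - s^2) * ρ :=
    mul_le_mul_of_nonneg_right (by linarith) (le_of_lt hρpos)
  linarith [h1, h2, h3, hρpos]

private lemma sqsd_le_of_forall_small {X Y α β : ℝ} (h : ∀ τ : ℝ, 0 < τ → τ ≤ 1 → X ≤ Y + α*τ + β*τ^2) :
    X ≤ Y := by
  by_contra hc
  push_neg at hc
  have hε0 : 0 < X - Y := by linarith
  have hd0 : (0:ℝ) < |α| + |β| + 1 := by positivity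
  obtain ⟨τ, hτdef⟩ : ∃ τ : ℝ, τ = min 1 ((X - Y) / (2 * (|α| + |β| + 1))) := ⟨_, rfl⟩
  have hτ0 : 0 < τ := by rw [hτdef]; exact lt_min one_pos (by positivity)
  have hτ1 : τ ≤ 1 := by rw [hτdef]; exact inf_le_left
  have hτ2 : τ ≤ (X - Y) / (2 * (|α| + |β| + 1)) := by rw [hτdef]; exact inf_le_right
  have h1 := h τ hτ0 hτ1
  have h2 : α * τ ≤ |α| * τ := mul_le_mul_of_nonneg_right (le_abs_self α) hτ0.le
  have h3 : β * τ^2 ≤ |β| * τ := by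
    have e1 : β * τ^2 ≤ |β| * τ^2 := mul_le_mul_of_nonneg_right (le_abs_self β) (sq_nonneg τ)
    nlinarith [mul_nonneg (mul_nonneg (abs_nonneg β) hτ0.le) (by linarith : (0:ℝ) ≤ 1 - τ)]
  have h5 : (|α| + |β| + 1) * τ ≤ (X - Y)/2 := by
    have := mul_le_mul_of_nonneg_left hτ2 hd0.le
    have e2 : (|α| + |β| + 1) * ((X - Y) / (2 * (|α| + |β| + 1))) = (X - Y)/2 := by
      field_simp
    linarith [this, e2.le, e2.ge]
  linarith [h1, h2, h3, h5, hε0, hτ0]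

private lemma sqsd_second_order {D : Matrix (Fin n) (Fin n) ℝ} {d : Fin n → ℝ} (hsym : Dᵀ = D)
    {w : Fin n → ℝ} {lam : ℝ} (hw : w ⬝ᵥ w = 1)
    (hmax : ∀ v : Fin n → ℝ, v ⬝ᵥ v = 1 →
      (1 / 2) * (v ⬝ᵥ D.mulVec v) + v ⬝ᵥ d ≤ (1 / 2) * (w ⬝ᵥ D.mulVec w) + w ⬝ᵥ d)
    (hkkt : D.mulVec w + d = lam • w) :
    ∀ u : Fin n → ℝ, u ⬝ᵥ D.mulVec u ≤ lam * (u ⬝ᵥ u) := by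
  -- master inequality for u = v - w with v unit
  have master : ∀ v : Fin n → ℝ, v ⬝ᵥ v = 1 →
      (v - w) ⬝ᵥ D.mulVec (v - w) ≤ lam * ((v - w) ⬝ᵥ (v - w)) := by
    intro v hv
    have hopt := hmax v hv
    have hu : v = w + (v - w) := by ring
    have hexp : v ⬝ᵥ D.mulVec v = w ⬝ᵥ D.mulVec w + 2 * (w ⬝ᵥ D.mulVec (v - w))
        + (v - w) ⬝ᵥ D.mulVec (v - w) := by
      nth_rewrite 1 [hu]; nth_rewrite 2 [hu]
      exact sqsd_quad_expand hsym w (v - w)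
    have hd1 : v ⬝ᵥ d = w ⬝ᵥ d + (v - w) ⬝ᵥ d := by
      rw [sub_dotProduct]; ring
    -- (v-w)⬝ᵥ(D w + d) = lam * ((v-w)⬝ᵥw)
    have hlin : (v - w) ⬝ᵥ (D.mulVec w) + (v - w) ⬝ᵥ d = lam * ((v - w) ⬝ᵥ w) := by
      have := congrArg (fun z => (v - w) ⬝ᵥ z) hkkt
      simpa [dotProduct_add, dotProduct_smul, smul_eq_mul] using this
    have hdot : (v - w) ⬝ᵥ w = -(1/2) * ((v - w) ⬝ᵥ (v - w)) := by
      have e1 : (v - w) ⬝ᵥ (v - w) = v ⬝ᵥ v - 2 * (v ⬝ᵥ w) + w ⬝ᵥ w := by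
        simp only [sub_dotProduct, dotProduct_sub]
        rw [dotProduct_comm w v]; ring
      have e2 : (v - w) ⬝ᵥ w = v ⬝ᵥ w - 1 := by
        rw [sub_dotProduct, hw]
      rw [e1, e2, hv, hw]; ring
    have hsymvw : w ⬝ᵥ D.mulVec (v - w) = (v - w) ⬝ᵥ D.mulVec w := sqsd_dotSym hsym w (v - w)
    have hdot2 : lam * ((v - w) ⬝ᵥ w) = -(1/2) * (lam * ((v - w) ⬝ᵥ (v - w))) := by
      rw [hdot]; ring
    linarith [hopt, hexp, hd1, hlin, hdot2, hsymvw]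
  -- extend to dot-negative u
  have stepb : ∀ u : Fin n → ℝ, u ⬝ᵥ w < 0 →
      u ⬝ᵥ D.mulVec u ≤ lam * (u ⬝ᵥ u) := by
    intro u huw
    have hu0 : u ≠ 0 := by
      intro h; rw [h] at huw; simp at huw
    have huu : 0 < u ⬝ᵥ u := by
      rcases lt_or_eq_of_le (Finset.sum_nonneg fun i _ => mul_self_nonneg (u i)) with h | h
      · exact h
      · exact absurd (dotProduct_self_eq_zero.mp h.symm) hu0
    set t := -2 * (u ⬝ᵥ w) / (u ⬝ᵥ u) with htdef
    have ht0 : 0 < t := by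
      apply div_pos (by linarith) huu
    have hv : (w + t • u) ⬝ᵥ (w + t • u) = 1 := by
      simp only [add_dotProduct, dotProduct_add, smul_dotProduct,
        dotProduct_smul, smul_eq_mul, hw]
      rw [dotProduct_comm w u]
      field_simp [htdef]
      have h' : t * (u ⬝ᵥ u) = -2 * (u ⬝ᵥ w) := by rw [htdef]; exact div_mul_cancel₀ _ huu.ne'
      linear_combination t * h'
    have hm := master (w + t • u) hv
    have he : (w + t • u) - w = t • u := by ring
    rw [he, sqsd_smul_quad] at hm
    have he2 : (t • u) ⬝ᵥ (t • u) = t * t * (u ⬝ᵥ u) := by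
      simp only [smul_dotProduct, dotProduct_smul, smul_eq_mul]; ring
    rw [he2] at hm
    have hm2 : (t*t) * (u ⬝ᵥ D.mulVec u) ≤ (t*t) * (lam * (u ⬝ᵥ u)) := by linarith [hm]
    exact le_of_mul_le_mul_left hm2 (mul_pos ht0 ht0)
  -- extend to all u
  intro u
  rcases lt_trichotomy (u ⬝ᵥ w) 0 with h | h | h
  · exact stepb u h
  · -- boundary case : use limit
    by_cases hu0 : u = 0
    · simp [hu0]
    apply sqsd_le_of_forall_small (α := 2 * (u ⬝ᵥ D.mulVec w))
      (β := lam - w ⬝ᵥ D.mulVec w)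
    intro τ hτ0 _
    have huw : (u - τ • w) ⬝ᵥ w < 0 := by
      rw [sub_dotProduct, smul_dotProduct, hw, h, smul_eq_mul]
      simpa using hτ0
    have hb := stepb _ huw
    have hexp1 : (u - τ • w) ⬝ᵥ D.mulVec (u - τ • w) =
        u ⬝ᵥ D.mulVec u - 2 * τ * (u ⬝ᵥ D.mulVec w) + τ^2 * (w ⬝ᵥ D.mulVec w) := by
      have : u - τ • w = u + (-τ) • w := by module
      rw [this, sqsd_quad_expand hsym, sqsd_smul_quad]
      have : u ⬝ᵥ D.mulVec ((-τ) • w) = -τ * (u ⬝ᵥ D.mulVec w) := by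
        rw [Matrix.mulVec_smul]
        simp [smul_eq_mul]
      rw [this]; ring
    have hexp2 : (u - τ • w) ⬝ᵥ (u - τ • w) = u ⬝ᵥ u + τ^2 := by
      simp only [sub_dotProduct, dotProduct_sub, smul_dotProduct,
        dotProduct_smul, smul_eq_mul, hw]
      rw [dotProduct_comm w u, h]; ring
    rw [hexp1, hexp2] at hb
    have hbw : -2 * τ * (u ⬝ᵥ D.mulVec w) ≥ -(2 * (u ⬝ᵥ D.mulVec w)) * τ := by ring_nf; rfl
    linarith [hb]
  · have h2 : (-u) ⬝ᵥ w < 0 := by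
      rw [neg_dotProduct]; linarith
    have hb := stepb _ h2
    simp only [neg_dotProduct, dotProduct_neg, Matrix.mulVec_neg, neg_neg] at hb
    exact hb

private lemma sqsd_Bsym {D : Matrix (Fin n) (Fin n) ℝ} (hsym : Dᵀ = D) (lam : ℝ) :
    (D - lam • (1 : Matrix (Fin n) (Fin n) ℝ))ᵀ = D - lam • 1 := by
  rw [Matrix.transpose_sub, hsym, Matrix.transpose_smul, Matrix.transpose_one]

private lemma sqsd_Bherm {B : Matrix (Fin n) (Fin n) ℝ} (h : Bᵀ = B) : B.IsHermitian := by
  ext i j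
  have := congrFun (congrFun h i) j
  simpa [Matrix.conjTranspose_apply, Matrix.transpose_apply] using this

-- quadratic form of B

private lemma sqsd_Bquad (D : Matrix (Fin n) (Fin n) ℝ) (lam : ℝ) (x : Fin n → ℝ) :
    x ⬝ᵥ (D - lam • (1 : Matrix (Fin n) (Fin n) ℝ)).mulVec x
      = x ⬝ᵥ D.mulVec x - lam * (x ⬝ᵥ x) := by
  rw [Matrix.sub_mulVec, dotProduct_sub, Matrix.smul_mulVec, Matrix.one_mulVec]
  simp [dotProduct_smul, smul_eq_mul]

private lemma sqsd_Bdet {D : Matrix (Fin n) (Fin n) ℝ} (hsym : Dᵀ = D) {lam : ℝ}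
    (hneg : ∀ x : Fin n → ℝ, x ≠ 0 → x ⬝ᵥ (D - lam • (1:Matrix (Fin n) (Fin n) ℝ)).mulVec x < 0) :
    IsUnit (D - lam • (1:Matrix (Fin n) (Fin n) ℝ)).det := by
  set B := D - lam • (1:Matrix (Fin n) (Fin n) ℝ) with hB
  have hpos : (-B).PosDef := by
    refine Matrix.PosDef.of_dotProduct_mulVec_pos ?_ ?_
    · exact sqsd_Bherm (by rw [Matrix.transpose_neg, sqsd_Bsym hsym])
    · intro x hx
      have := hneg x hx
      simp only [star_trivial, Matrix.neg_mulVec, dotProduct_neg]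
      linarith
  have h1 : (-B).det ≠ 0 := ne_of_gt hpos.det_pos
  have h2 : (-B).det = (-1)^n * B.det := by
    rw [show -B = (-1 : ℝ) • B by simp, Matrix.det_smul]
    simp
  rw [h2] at h1
  apply isUnit_iff_ne_zero.mpr
  intro h3
  rw [h3, mul_zero] at h1
  exact h1 rfl

private lemma sqsd_Bmul {B : Matrix (Fin n) (Fin n) ℝ} (h : IsUnit B.det) (v : Fin n → ℝ) :
    B.mulVec (B⁻¹.mulVec v) = v := by
  rw [Matrix.mulVec_mulVec, Matrix.mul_nonsing_inv _ h, Matrix.one_mulVec]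

-- WEAK DUALITY

private lemma sqsd_weak_duality {D : Matrix (Fin n) (Fin n) ℝ} {d : Fin n → ℝ} (hsym : Dᵀ = D)
    {lam : ℝ}
    (hnegsd : ∀ x : Fin n → ℝ, x ⬝ᵥ (D - lam • (1:Matrix (Fin n) (Fin n) ℝ)).mulVec x ≤ 0)
    (hdet : IsUnit (D - lam • (1:Matrix (Fin n) (Fin n) ℝ)).det)
    {w : Fin n → ℝ} (hw : w ⬝ᵥ w = 1) :
    (1/2) * (w ⬝ᵥ D.mulVec w) + w ⬝ᵥ d ≤
      -(1/2) * (d ⬝ᵥ ((D - lam • (1:Matrix (Fin n) (Fin n) ℝ))⁻¹).mulVec d) + lam / 2 := by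
  set B := D - lam • (1:Matrix (Fin n) (Fin n) ℝ) with hB
  have hsB : Bᵀ = B := sqsd_Bsym hsym lam
  set z := B⁻¹.mulVec d with hz
  have hBz : B.mulVec z = d := sqsd_Bmul hdet d
  have h0 := hnegsd (w + z)
  rw [sqsd_quad_expand hsB] at h0
  have e1 : w ⬝ᵥ B.mulVec z = w ⬝ᵥ d := by rw [hBz]
  have e2 : z ⬝ᵥ B.mulVec z = z ⬝ᵥ d := by rw [hBz]
  have e3 : w ⬝ᵥ B.mulVec w = w ⬝ᵥ D.mulVec w - lam := by
    rw [hB, sqsd_Bquad, hw, mul_one]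
  have e4 : d ⬝ᵥ z = z ⬝ᵥ d := dotProduct_comm d z
  rw [e1, e2, e3] at h0
  rw [e4]
  linarith

-- UPPER BOUND

private lemma sqsd_upper_bound {D : Matrix (Fin n) (Fin n) ℝ} {d : Fin n → ℝ} (hsym : Dᵀ = D)
    {w : Fin n → ℝ} {l : ℝ} (hw : w ⬝ᵥ w = 1)
    (hkkt : D.mulVec w + d = l • w)
    (hpsd2 : ∀ u : Fin n → ℝ, u ⬝ᵥ D.mulVec u ≤ l * (u ⬝ᵥ u))
    {δ : ℝ} (hδ : 0 < δ)
    (hdet : IsUnit (D - (l + δ) • (1:Matrix (Fin n) (Fin n) ℝ)).det) :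
    -(1/2) * (d ⬝ᵥ ((D - (l + δ) • (1:Matrix (Fin n) (Fin n) ℝ))⁻¹).mulVec d) + (l + δ) / 2
      ≤ (1/2) * (w ⬝ᵥ D.mulVec w) + w ⬝ᵥ d + δ / 2 := by
  set B := D - (l + δ) • (1:Matrix (Fin n) (Fin n) ℝ) with hB
  have hsB : Bᵀ = B := sqsd_Bsym hsym (l + δ)
  set z := B⁻¹.mulVec d with hz
  set y := B⁻¹.mulVec w with hy
  have hBz : B.mulVec z = d := sqsd_Bmul hdet d
  have hBy : B.mulVec y = w := sqsd_Bmul hdet w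
  have hDw : D.mulVec w = l • w - d := by
    rw [eq_sub_iff_add_eq]; exact hkkt
  have f1 : B.mulVec w = -d - δ • w := by
    rw [hB, Matrix.sub_mulVec, Matrix.smul_mulVec, Matrix.one_mulVec, hDw]
    module
  have f2 : w = -z - δ • y := by
    have := congrArg (fun v => B⁻¹.mulVec v) f1
    rw [Matrix.mulVec_sub, Matrix.mulVec_neg, Matrix.mulVec_smul, ← hz, ← hy] at this
    have hinj : B⁻¹.mulVec (B.mulVec w) = w := by
      rw [Matrix.mulVec_mulVec, Matrix.nonsing_inv_mul _ hdet, Matrix.one_mulVec]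
    rw [← hinj, this]
  -- d ⬝ᵥ y ≤ 0
  have hdw : d ⬝ᵥ w = l - w ⬝ᵥ D.mulVec w := by
    have h1 := congrArg (fun v => v ⬝ᵥ w) hkkt
    simp only [add_dotProduct, smul_dotProduct, smul_eq_mul, hw, mul_one] at h1
    have h3 : (D.mulVec w) ⬝ᵥ w = w ⬝ᵥ D.mulVec w := dotProduct_comm _ _
    linarith [h1, h3.le, h3.ge]
  have hAy : ∀ u : Fin n → ℝ, 0 ≤ u ⬝ᵥ ((l • (1:Matrix (Fin n) (Fin n) ℝ) - D).mulVec u) := by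
    intro u
    have h1 : u ⬝ᵥ (l • (1:Matrix (Fin n) (Fin n) ℝ) - D).mulVec u
        = l * (u ⬝ᵥ u) - u ⬝ᵥ D.mulVec u := by
      rw [Matrix.sub_mulVec, dotProduct_sub, Matrix.smul_mulVec, Matrix.one_mulVec]
      simp [dotProduct_smul, smul_eq_mul]
    rw [h1]
    linarith [hpsd2 u]
  set A := l • (1:Matrix (Fin n) (Fin n) ℝ) - D with hA
  have hsA : Aᵀ = A := by
    rw [hA, Matrix.transpose_sub, hsym, Matrix.transpose_smul, Matrix.transpose_one]
  have hdA : d = A.mulVec w := by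
    rw [hA, Matrix.sub_mulVec, Matrix.smul_mulVec, Matrix.one_mulVec, hDw]
    module
  have hBA : ∀ v : Fin n → ℝ, B.mulVec v = -(A.mulVec v) - δ • v := by
    intro v
    rw [hB, hA, Matrix.sub_mulVec, Matrix.sub_mulVec, Matrix.smul_mulVec,
      Matrix.smul_mulVec, Matrix.one_mulVec, add_smul]
    module
  have hdy : d ⬝ᵥ y ≤ 0 := by
    have e1 : d ⬝ᵥ y = y ⬝ᵥ d := dotProduct_comm d y
    have e2 : y ⬝ᵥ d = y ⬝ᵥ A.mulVec w := by rw [← hdA]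
    have e3 : y ⬝ᵥ A.mulVec w = w ⬝ᵥ A.mulVec y := sqsd_dotSym hsA y w
    have e4 : w ⬝ᵥ A.mulVec y = (B.mulVec y) ⬝ᵥ A.mulVec y := by rw [hBy]
    have e5 : (B.mulVec y) ⬝ᵥ A.mulVec y
        = -((A.mulVec y) ⬝ᵥ (A.mulVec y)) - δ * (y ⬝ᵥ A.mulVec y) := by
      rw [hBA y]
      simp only [sub_dotProduct, neg_dotProduct, smul_dotProduct,
        smul_eq_mul]
    have e6 : 0 ≤ (A.mulVec y) ⬝ᵥ (A.mulVec y) :=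
      Finset.sum_nonneg fun i _ => mul_self_nonneg _
    have e7 := hAy y
    rw [e1, e2, e3, e4, e5]
    nlinarith [e6, e7, hδ]
  -- conclude
  have hwz : d ⬝ᵥ (w + z) = -δ * (d ⬝ᵥ y) := by
    nth_rewrite 1 [f2]
    simp only [dotProduct_add, dotProduct_sub, dotProduct_neg,
      dotProduct_smul, smul_eq_mul]
    ring
  have hwz2 : 0 ≤ d ⬝ᵥ w + d ⬝ᵥ z := by
    have : d ⬝ᵥ (w + z) = d ⬝ᵥ w + d ⬝ᵥ z := dotProduct_add d w z
    rw [← this, hwz]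
    nlinarith [hdy, hδ]
  rw [show d ⬝ᵥ w = w ⬝ᵥ d from dotProduct_comm d w] at hwz2 hdw
  linarith [hwz2, hdw]

end SQSD_Aux


set_option maxHeartbeats 1000000 in
/-- **Strong duality for maximization of a convex quadratic over the unit sphere.**
Let `D ⪰ 0` and `V(w) = ½wᵀDw + wᵀd`.  Then the maximum of `V` over the unit sphere is
attained, and it equals `inf_{λ > ‖D‖} [−½ dᵀ(D − λI)⁻¹ d + λ/2]`. -/
theorem sphere_quadratic_strong_duality {n : ℕ} (hn : 0 < n)
    (D : Matrix (Fin n) (Fin n) ℝ) (d : Fin n → ℝ) (hD : D.PosSemidef) :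
    ∃ wStar : Fin n → ℝ, (∑ i, wStar i ^ 2 = 1) ∧
      (∀ w : Fin n → ℝ, ∑ i, w i ^ 2 = 1 →
        (1 / 2) * (w ⬝ᵥ D.mulVec w) + w ⬝ᵥ d ≤
          (1 / 2) * (wStar ⬝ᵥ D.mulVec wStar) + wStar ⬝ᵥ d) ∧
      (1 / 2) * (wStar ⬝ᵥ D.mulVec wStar) + wStar ⬝ᵥ d =
        ⨅ lam : {l : ℝ // l2n D < l},
          (-(1 / 2) * (d ⬝ᵥ ((D - (lam : ℝ) • (1 : Matrix (Fin n) (Fin n) ℝ))⁻¹).mulVec d) +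
            (lam : ℝ) / 2) := by
  have hsym : Dᵀ = D := by
    ext i j
    have := congrFun (congrFun hD.1 i) j
    simpa [Matrix.conjTranspose_apply, Matrix.transpose_apply] using this
  have hpsd : ∀ x : Fin n → ℝ, 0 ≤ x ⬝ᵥ D.mulVec x := by
    intro x
    simpa using hD.dotProduct_mulVec_nonneg x
  obtain ⟨w, hwS, hmaxS⟩ := sqsd_exists_max hn D d
  have hw : w ⬝ᵥ w = 1 := by rw [← sqsd_sq_sum_eq]; exact hwS
  have hmax : ∀ v : Fin n → ℝ, v ⬝ᵥ v = 1 →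
      (1 / 2) * (v ⬝ᵥ D.mulVec v) + v ⬝ᵥ d ≤ (1 / 2) * (w ⬝ᵥ D.mulVec w) + w ⬝ᵥ d :=
    fun v hv => hmaxS v (by rw [sqsd_sq_sum_eq]; exact hv)
  have hkkt : D.mulVec w + d = ((D.mulVec w + d) ⬝ᵥ w) • w := sqsd_kkt hsym hpsd hw hmax
  set lam := (D.mulVec w + d) ⬝ᵥ w with hlamdef
  have hpsd2 : ∀ u : Fin n → ℝ, u ⬝ᵥ D.mulVec u ≤ lam * (u ⬝ᵥ u) :=
    sqsd_second_order hsym hw hmax hkkt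
  have hl2n : l2n D ≤ lam := sqsd_l2n_le_lam hn hsym hpsd hpsd2
  -- facts for any lam' > l2n D
  have hnegsd : ∀ lam' : ℝ, l2n D < lam' → ∀ x : Fin n → ℝ,
      x ⬝ᵥ (D - lam' • (1 : Matrix (Fin n) (Fin n) ℝ)).mulVec x ≤ 0 := by
    intro lam' hlam' x
    rw [sqsd_Bquad]
    have h1 := sqsd_l2n_rayleigh D x
    have h2 : l2n D * (x ⬝ᵥ x) ≤ lam' * (x ⬝ᵥ x) :=
      mul_le_mul_of_nonneg_right hlam'.le (sqsd_dot_self_nonneg x)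
    linarith
  have hneg : ∀ lam' : ℝ, l2n D < lam' → ∀ x : Fin n → ℝ, x ≠ 0 →
      x ⬝ᵥ (D - lam' • (1 : Matrix (Fin n) (Fin n) ℝ)).mulVec x < 0 := by
    intro lam' hlam' x hx
    rw [sqsd_Bquad]
    have hxx : 0 < x ⬝ᵥ x := by
      rcases lt_or_eq_of_le (sqsd_dot_self_nonneg x) with h | h
      · exact h
      · exact absurd (dotProduct_self_eq_zero.mp h.symm) hx
    have h1 := sqsd_l2n_rayleigh D x
    have h2 : l2n D * (x ⬝ᵥ x) < lam' * (x ⬝ᵥ x) :=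
      mul_lt_mul_of_pos_right hlam' hxx
    linarith
  have hdet : ∀ lam' : ℝ, l2n D < lam' →
      IsUnit (D - lam' • (1 : Matrix (Fin n) (Fin n) ℝ)).det :=
    fun lam' hlam' => sqsd_Bdet hsym (hneg lam' hlam')
  have hweak : ∀ lam' : {l : ℝ // l2n D < l},
      (1 / 2) * (w ⬝ᵥ D.mulVec w) + w ⬝ᵥ d ≤
        -(1 / 2) * (d ⬝ᵥ ((D - (lam' : ℝ) • (1 : Matrix (Fin n) (Fin n) ℝ))⁻¹).mulVec d) +
          (lam' : ℝ) / 2 :=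
    fun lam' => sqsd_weak_duality hsym (hnegsd _ lam'.2) (hdet _ lam'.2) hw
  have hNe : Nonempty {l : ℝ // l2n D < l} := ⟨⟨l2n D + 1, lt_add_one _⟩⟩
  refine ⟨w, hwS, hmaxS, ?_⟩
  apply le_antisymm
  · exact le_ciInf hweak
  · apply le_of_forall_pos_le_add
    intro ε hε
    have hlt : l2n D < lam + ε := lt_of_le_of_lt hl2n (by linarith)
    have hbdd : BddBelow (Set.range fun lam' : {l : ℝ // l2n D < l} =>
        -(1 / 2) * (d ⬝ᵥ ((D - (lam' : ℝ) • (1 : Matrix (Fin n) (Fin n) ℝ))⁻¹).mulVec d) +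
          (lam' : ℝ) / 2) := by
      refine ⟨(1 / 2) * (w ⬝ᵥ D.mulVec w) + w ⬝ᵥ d, ?_⟩
      rintro _ ⟨lam', rfl⟩
      exact hweak lam'
    have hstep := ciInf_le hbdd (⟨lam + ε, hlt⟩ : {l : ℝ // l2n D < l})
    have hub := sqsd_upper_bound hsym hw hkkt hpsd2 hε (hdet _ hlt)
    calc ⨅ lam' : {l : ℝ // l2n D < l},
          (-(1 / 2) * (d ⬝ᵥ ((D - (lam' : ℝ) • (1 : Matrix (Fin n) (Fin n) ℝ))⁻¹).mulVec d) +
            (lam' : ℝ) / 2)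
        ≤ -(1 / 2) * (d ⬝ᵥ ((D - (lam + ε) • (1 : Matrix (Fin n) (Fin n) ℝ))⁻¹).mulVec d) +
            (lam + ε) / 2 := hstep
      _ ≤ (1 / 2) * (w ⬝ᵥ D.mulVec w) + w ⬝ᵥ d + ε / 2 := hub
      _ ≤ (1 / 2) * (w ⬝ᵥ D.mulVec w) + w ⬝ᵥ d + ε := by linarith
end

section
/- Let D be an n×n real symmetric positive semidefinite matrix, d ∈ ℝⁿ, and λ ∈ ℝ with λ > ‖D‖. Suppose w* := −(D − λI)⁻¹d satisfies ‖w*‖ = 1. Then w* maximizes V(w) = ½wᵀDw + wᵀd over the unit sphere {w : ‖w‖ = 1}, i.e., V(w) ≤ V(w*) for every w with ‖w‖ = 1, and V(w*) = −½ dᵀ(D − λI)⁻¹ d + λ/2. -/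
open Matrix

lemma dot_le_l2n {n : ℕ} (D : Matrix (Fin n) (Fin n) ℝ) (x : Fin n → ℝ) :
    x ⬝ᵥ D.mulVec x ≤ l2n D * ∑ i, x i ^ 2 := by
  set f := LinearMap.toContinuousLinearMap (Matrix.toEuclideanLin D) with hf
  set x' : EuclideanSpace ℝ (Fin n) := (WithLp.equiv 2 _).symm x with hx'
  have hfx : f x' = (WithLp.equiv 2 (Fin n → ℝ)).symm (D.mulVec x) := by
    simp [hf, hx']
  have hxn : ‖x'‖ ^ 2 = ∑ i, x i ^ 2 := by
    rw [EuclideanSpace.norm_eq, Real.sq_sqrt (by positivity)]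
    refine Finset.sum_congr rfl fun i _ => ?_
    rw [Real.norm_eq_abs, sq_abs]
    rfl
  have h1 : x ⬝ᵥ D.mulVec x = (inner ℝ x' (f x') : ℝ) := by
    rw [hfx, hx', WithLp.equiv_symm_apply, EuclideanSpace.inner_toLp_toLp, star_trivial,
      dotProduct_comm]
  rw [h1]
  calc (inner ℝ x' (f x') : ℝ) ≤ ‖x'‖ * ‖f x'‖ := real_inner_le_norm _ _
    _ ≤ ‖x'‖ * (‖f‖ * ‖x'‖) := by
        have := f.le_opNorm x'
        nlinarith [norm_nonneg x']
    _ = l2n D * ∑ i, x i ^ 2 := by rw [l2n, ← hf, ← hxn]; ring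

/-- **Optimality of the stationary point on the unit sphere.**
Let `D ⪰ 0`, `λ > ‖D‖`, and suppose `w* = −(D − λI)⁻¹d` has unit norm.  Then `w*`
maximizes `V(w) = ½wᵀDw + wᵀd` over the unit sphere, with optimal value
`−½ dᵀ(D − λI)⁻¹ d + λ/2`. -/
theorem sphere_quadratic_optimizer {n : ℕ}
    (D : Matrix (Fin n) (Fin n) ℝ) (d : Fin n → ℝ) (lam : ℝ)
    (hD : D.PosSemidef) (hlam : l2n D < lam)
    (hw : ∑ i, (-(((D - lam • (1 : Matrix (Fin n) (Fin n) ℝ))⁻¹).mulVec d)) i ^ 2 = 1) :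
    (∀ w : Fin n → ℝ, ∑ i, w i ^ 2 = 1 →
      (1 / 2) * (w ⬝ᵥ D.mulVec w) + w ⬝ᵥ d ≤
        (1 / 2) * ((-(((D - lam • (1 : Matrix (Fin n) (Fin n) ℝ))⁻¹).mulVec d)) ⬝ᵥ
            D.mulVec (-(((D - lam • (1 : Matrix (Fin n) (Fin n) ℝ))⁻¹).mulVec d))) +
          (-(((D - lam • (1 : Matrix (Fin n) (Fin n) ℝ))⁻¹).mulVec d)) ⬝ᵥ d) ∧
    (1 / 2) * ((-(((D - lam • (1 : Matrix (Fin n) (Fin n) ℝ))⁻¹).mulVec d)) ⬝ᵥ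
        D.mulVec (-(((D - lam • (1 : Matrix (Fin n) (Fin n) ℝ))⁻¹).mulVec d))) +
      (-(((D - lam • (1 : Matrix (Fin n) (Fin n) ℝ))⁻¹).mulVec d)) ⬝ᵥ d =
    -(1 / 2) * (d ⬝ᵥ ((D - lam • (1 : Matrix (Fin n) (Fin n) ℝ))⁻¹).mulVec d) + lam / 2 := by
  have hDt : Dᵀ = D := by
    calc Dᵀ = Dᴴ := by ext i j; simp [Matrix.conjTranspose_apply]
    _ = D := hD.1
  set M := D - lam • (1 : Matrix (Fin n) (Fin n) ℝ) with hM
  set w := -(M⁻¹.mulVec d) with hwdef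
  -- positivity of lam • 1 - D as a quadratic form
  have hquad : ∀ x : Fin n → ℝ, 0 ≤ lam * (x ⬝ᵥ x) - x ⬝ᵥ D.mulVec x := by
    intro x
    have h1 := dot_le_l2n D x
    have h2 : x ⬝ᵥ x = ∑ i, x i ^ 2 := by simp [dotProduct, sq]
    have h3 : (0:ℝ) ≤ ∑ i, x i ^ 2 := by positivity
    rw [h2]
    nlinarith [mul_nonneg (sub_pos.mpr hlam).le h3]
  -- (lam • 1 - D) is positive definite
  have hpd : (lam • (1 : Matrix (Fin n) (Fin n) ℝ) - D).PosDef := by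
    rw [Matrix.posDef_iff_dotProduct_mulVec]
    constructor
    · simp [Matrix.IsHermitian, Matrix.conjTranspose_sub,
        Matrix.conjTranspose_smul, hDt]
    · intro x hx
      have hx2 : (0:ℝ) < ∑ i, x i ^ 2 := by
        rcases Function.ne_iff.mp hx with ⟨i, hi⟩
        have : 0 < x i ^ 2 := sq_pos_of_ne_zero hi
        exact Finset.sum_pos' (fun j _ => by positivity) ⟨i, Finset.mem_univ i, this⟩
      have h1 := dot_le_l2n D x
      have key : 0 < lam * (∑ i, x i ^ 2) - x ⬝ᵥ D.mulVec x := by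
        have hnn : 0 ≤ l2n D := norm_nonneg _
        nlinarith
      have hexp : star x ⬝ᵥ (lam • (1 : Matrix (Fin n) (Fin n) ℝ) - D).mulVec x
          = lam * (∑ i, x i ^ 2) - x ⬝ᵥ D.mulVec x := by
        have : (star x : Fin n → ℝ) = x := by simp
        rw [this, Matrix.sub_mulVec, dotProduct_sub, Matrix.smul_mulVec,
          Matrix.one_mulVec, dotProduct_smul]
        have : x ⬝ᵥ x = ∑ i, x i ^ 2 := by simp [dotProduct, sq]
        rw [this]; rfl
      rw [hexp]; exact key
  have hunit : IsUnit M := by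
    have : M = -(lam • (1 : Matrix (Fin n) (Fin n) ℝ) - D) := by rw [hM, neg_sub]
    rw [this]
    exact hpd.isUnit.neg
  have hdet : IsUnit M.det := (Matrix.isUnit_iff_isUnit_det M).mp hunit
  have hMl : M⁻¹ * M = 1 := Matrix.nonsing_inv_mul M hdet
  have hMr : M * M⁻¹ = 1 := Matrix.mul_nonsing_inv M hdet
  -- M w = -d
  have hMw : M.mulVec w = -d := by
    rw [hwdef, Matrix.mulVec_neg, Matrix.mulVec_mulVec, hMr, Matrix.one_mulVec]
  -- d = lam • w - D w
  have hd : d = lam • w - D.mulVec w := by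
    have : D.mulVec w - lam • w = -d := by
      rw [← hMw, hM, Matrix.sub_mulVec, Matrix.smul_mulVec, Matrix.one_mulVec]
    have := congrArg Neg.neg this
    simp at this
    funext i
    have h := congrFun this i
    simp [Pi.sub_apply] at h ⊢
    linarith [h]
  have hww : w ⬝ᵥ w = 1 := by
    rw [show w ⬝ᵥ w = ∑ i, w i ^ 2 by simp [dotProduct, sq]]
    exact hw
  -- symmetric trick: for any u, u ⬝ᵥ D.mulVec w = w ⬝ᵥ D.mulVec u
  have hsym : ∀ u v : Fin n → ℝ, u ⬝ᵥ D.mulVec v = v ⬝ᵥ D.mulVec u := by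
    intro u v
    rw [Matrix.dotProduct_mulVec, ← Matrix.vecMul_transpose, hDt, dotProduct_comm]
  -- value of w ⬝ᵥ d
  have hwd : w ⬝ᵥ d = lam - w ⬝ᵥ D.mulVec w := by
    rw [hd, dotProduct_sub, dotProduct_smul, smul_eq_mul, hww, mul_one]
  constructor
  · intro u hu
    have huu : u ⬝ᵥ u = 1 := by
      rw [show u ⬝ᵥ u = ∑ i, u i ^ 2 by simp [dotProduct, sq]]
      exact hu
    have hud : u ⬝ᵥ d = lam * (u ⬝ᵥ w) - u ⬝ᵥ D.mulVec w := by
      rw [hd, dotProduct_sub, dotProduct_smul, smul_eq_mul]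
    have hkey := hquad (u - w)
    have hexp : (u - w) ⬝ᵥ (u - w) = u ⬝ᵥ u - 2 * (u ⬝ᵥ w) + w ⬝ᵥ w := by
      rw [sub_dotProduct, dotProduct_sub, dotProduct_sub,
        dotProduct_comm w u]
      ring
    have hexp2 : (u - w) ⬝ᵥ D.mulVec (u - w)
        = u ⬝ᵥ D.mulVec u - 2 * (u ⬝ᵥ D.mulVec w) + w ⬝ᵥ D.mulVec w := by
      rw [Matrix.mulVec_sub, sub_dotProduct, dotProduct_sub,
        dotProduct_sub, hsym w u]
      ring
    rw [hexp, hexp2, huu, hww] at hkey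
    rw [hud, hwd]
    nlinarith
  · -- value equation
    have hwDw : w ⬝ᵥ D.mulVec w = lam - w ⬝ᵥ d := by linarith [hwd]
    have hwd2 : w ⬝ᵥ d = -(d ⬝ᵥ M⁻¹.mulVec d) := by
      rw [hwdef, neg_dotProduct, dotProduct_comm]
    rw [hwDw]
    rw [hwd2]
    ring
end

section
/- Let D be an n×n real symmetric matrix, d ∈ ℝⁿ, and λ ∈ ℝ with λ > ‖D‖. Suppose ‖(D − λI)⁻¹d‖ = 1. Then λ is a real eigenvalue of the 2n×2n block matrix P = [[D, I],[ddᵀ, D]]; an eigenvector is given by the stacked vector [(λI − D)⁻²d ; (λI − D)⁻¹d], which is nonzero. -/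
open Matrix

set_option maxHeartbeats 800000 in
set_option synthInstance.maxHeartbeats 200000 in
/-- **The multiplier is an eigenvalue of the block matrix `P = [[D, I],[ddᵀ, D]]`.**
If `D` is symmetric, `λ > ‖D‖`, and `‖(D − λI)⁻¹d‖ = 1`, then the nonzero stacked vector
`[(λI − D)⁻²d ; (λI − D)⁻¹d]` is an eigenvector of `P` with eigenvalue `λ`. -/
theorem multiplier_eigenvalue {n : ℕ}
    (D : Matrix (Fin n) (Fin n) ℝ) (d : Fin n → ℝ) (lam : ℝ)
    (hD : D.IsHermitian) (hlam : l2n D < lam)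
    (hunit : ∑ i, (((D - lam • (1 : Matrix (Fin n) (Fin n) ℝ))⁻¹).mulVec d) i ^ 2 = 1) :
    Sum.elim
        (((lam • (1 : Matrix (Fin n) (Fin n) ℝ) - D)⁻¹ *
          (lam • (1 : Matrix (Fin n) (Fin n) ℝ) - D)⁻¹).mulVec d)
        (((lam • (1 : Matrix (Fin n) (Fin n) ℝ) - D)⁻¹).mulVec d) ≠ 0 ∧
      (Matrix.fromBlocks D (1 : Matrix (Fin n) (Fin n) ℝ) (Matrix.vecMulVec d d) D).mulVec
        (Sum.elim
          (((lam • (1 : Matrix (Fin n) (Fin n) ℝ) - D)⁻¹ *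
            (lam • (1 : Matrix (Fin n) (Fin n) ℝ) - D)⁻¹).mulVec d)
          (((lam • (1 : Matrix (Fin n) (Fin n) ℝ) - D)⁻¹).mulVec d)) =
      lam • Sum.elim
          (((lam • (1 : Matrix (Fin n) (Fin n) ℝ) - D)⁻¹ *
            (lam • (1 : Matrix (Fin n) (Fin n) ℝ) - D)⁻¹).mulVec d)
          (((lam • (1 : Matrix (Fin n) (Fin n) ℝ) - D)⁻¹).mulVec d) := by
  set M : Matrix (Fin n) (Fin n) ℝ := lam • 1 - D with hMdef
  have hlam0 : 0 < lam := lt_of_le_of_lt (norm_nonneg _) hlam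
  -- M is invertible
  have hMunit : IsUnit M := by
    rw [← Matrix.mulVec_injective_iff_isUnit]
    have hker : ∀ x : Fin n → ℝ, M.mulVec x = 0 → x = 0 := by
      intro x hx
      have hDx : D.mulVec x = lam • x := by
        have h0 : (lam • (1:Matrix (Fin n) (Fin n) ℝ)).mulVec x - D.mulVec x = 0 := by
          rw [← Matrix.sub_mulVec]; exact hx
        have h1 : (lam • (1:Matrix (Fin n) (Fin n) ℝ)).mulVec x = lam • x := by
          rw [Matrix.smul_mulVec, Matrix.one_mulVec]
        rw [h1] at h0
        exact (sub_eq_zero.mp h0).symm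
      set v : EuclideanSpace ℝ (Fin n) := (WithLp.equiv 2 (Fin n → ℝ)).symm x with hv
      have hb : ‖(Matrix.toEuclideanLin D) v‖ ≤ l2n D * ‖v‖ := by
        have h := (LinearMap.toContinuousLinearMap (Matrix.toEuclideanLin D)).le_opNorm v
        simpa [l2n] using h
      have hDv : (Matrix.toEuclideanLin D) v = lam • v := by
        rw [hv, WithLp.equiv_symm_apply, Matrix.toEuclideanLin_apply_piLp_toLp, hDx]
        rfl
      rw [hDv, norm_smul, Real.norm_eq_abs, abs_of_pos hlam0] at hb
      have hvz : ‖v‖ = 0 := by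
        by_contra h
        have hpos : 0 < ‖v‖ := lt_of_le_of_ne (norm_nonneg v) (Ne.symm h)
        nlinarith
      have hv0 : v = 0 := norm_eq_zero.mp hvz
      have hx0 := congrArg (WithLp.equiv 2 (Fin n → ℝ)) hv0
      simpa [hv] using hx0
    intro a b hab
    have h0 : M.mulVec (a - b) = 0 := by rw [Matrix.mulVec_sub, hab, sub_self]
    exact sub_eq_zero.mp (hker _ h0)
  have hMM : M⁻¹ * M = 1 := Matrix.nonsing_inv_mul M (Matrix.isUnit_iff_isUnit_det M |>.mp hMunit)
  have hMM' : M * M⁻¹ = 1 := Matrix.mul_nonsing_inv M (Matrix.isUnit_iff_isUnit_det M |>.mp hMunit)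
  -- symmetry of M
  have hDt : Dᵀ = D := by
    simpa [Matrix.conjTranspose_eq_transpose_of_trivial] using hD.eq
  have hMt : Mᵀ = M := by
    rw [hMdef, Matrix.transpose_sub, Matrix.transpose_smul, Matrix.transpose_one, hDt]
  set u : Fin n → ℝ := M⁻¹.mulVec d with hu
  set w : Fin n → ℝ := (M⁻¹ * M⁻¹).mulVec d with hw
  -- rewrite hunit
  have hneg : (D - lam • (1 : Matrix (Fin n) (Fin n) ℝ))⁻¹ = -(M⁻¹) := by
    have h1 : D - lam • (1 : Matrix (Fin n) (Fin n) ℝ) = -M := (neg_sub _ _).symm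
    rw [h1]
    refine Matrix.inv_eq_left_inv ?_
    rw [Matrix.neg_mul, Matrix.mul_neg, neg_neg, hMM]
  have hunit' : ∑ i, u i ^ 2 = 1 := by
    rw [hneg, Matrix.neg_mulVec] at hunit
    simpa [neg_pow, ← hu] using hunit
  -- key identities
  have hMw : M.mulVec w = u := by
    rw [hw, Matrix.mulVec_mulVec, ← Matrix.mul_assoc, hMM', Matrix.one_mul, hu]
  have hMu : M.mulVec u = d := by
    rw [hu, Matrix.mulVec_mulVec, hMM', Matrix.one_mulVec]
  have hMw' : lam • w - D.mulVec w = u := by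
    rw [← hMw, hMdef, Matrix.sub_mulVec, Matrix.smul_mulVec, Matrix.one_mulVec]
  have hMu' : lam • u - D.mulVec u = d := by
    rw [← hMu, hMdef, Matrix.sub_mulVec, Matrix.smul_mulVec, Matrix.one_mulVec]
  have hdw : d ⬝ᵥ w = 1 := by
    have h1 : d ⬝ᵥ w = u ⬝ᵥ u := by
      rw [← hMu, dotProduct_comm, Matrix.dotProduct_mulVec, ← hMt,
        Matrix.vecMul_transpose, hMw]
    rw [h1]
    simpa [dotProduct, sq] using hunit'
  have hu0 : u ≠ 0 := by
    intro h
    rw [h] at hunit'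
    simp at hunit'
  have htop : D.mulVec w + (1 : Matrix (Fin n) (Fin n) ℝ).mulVec u = lam • w := by
    rw [Matrix.one_mulVec, ← hMw']; abel
  have hvv : (Matrix.vecMulVec d d).mulVec w = d := by
    funext i
    have : (Matrix.vecMulVec d d).mulVec w i = d i * (d ⬝ᵥ w) := by
      simp [Matrix.mulVec, Matrix.vecMulVec_apply, dotProduct, Finset.mul_sum, mul_assoc]
    rw [this, hdw, mul_one]
  have hbot : (Matrix.vecMulVec d d).mulVec w + D.mulVec u = lam • u := by
    rw [hvv, ← hMu']; abel
  constructor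
  · intro h
    apply hu0
    funext i
    have := congrFun h (Sum.inr i)
    simpa using this
  · rw [Matrix.fromBlocks_mulVec]
    rw [Sum.elim_comp_inl, Sum.elim_comp_inr, htop, hbot]
    funext i
    cases i <;> simp
end

section
/- Let M₁₁ be an m×m real symmetric positive definite matrix, M₂₂ a q×q real symmetric matrix, M₁₂ an m×q real matrix, and d = (d₁, d₂) ∈ ℝ^{m+q}. Assume the block matrix M(0) = [[M₁₁, M₁₂],[M₁₂ᵀ, M₂₂]] is positive semidefinite, and let λ > ‖M₂₂‖. Define M(λ) = [[M₁₁, M₁₂],[M₁₂ᵀ, M₂₂ − λI]] and L(u,w,λ) = ½(u,w)ᵀM(λ)(u,w) + (u,w)ᵀd + λ/2. Then M(λ) is invertible, and the pair (u*, w*) = −M(λ)⁻¹d is a saddle point of L(·,·,λ): L(u*, w, λ) ≤ L(u*, w*, λ) ≤ L(u, w*, λ) for all u ∈ ℝᵐ and w ∈ ℝ^q, with saddle value L(u*, w*, λ) = −½ dᵀM(λ)⁻¹d + λ/2. -/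
open scoped RealInnerProductSpace


open Matrix

lemma l2n_bound {a : ℕ} (M : Matrix (Fin a) (Fin a) ℝ) (v : Fin a → ℝ) :
    v ⬝ᵥ M.mulVec v ≤ l2n M * (v ⬝ᵥ v) := by
  set e : EuclideanSpace ℝ (Fin a) := (WithLp.equiv 2 _).symm v with he
  have h1 : v ⬝ᵥ M.mulVec v = ⟪e, Matrix.toEuclideanLin M e⟫ := by
    rw [dotProduct_comm]; rfl
  have h2 : ⟪e, Matrix.toEuclideanLin M e⟫ ≤ ‖e‖ * ‖Matrix.toEuclideanLin M e‖ :=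
    real_inner_le_norm _ _
  have h3 : ‖Matrix.toEuclideanLin M e‖ ≤ l2n M * ‖e‖ := by
    have := (LinearMap.toContinuousLinearMap (Matrix.toEuclideanLin M)).le_opNorm e
    simpa only [l2n, LinearMap.coe_toContinuousLinearMap'] using this
  have h4 : v ⬝ᵥ v = ‖e‖ ^ 2 := by
    have : v ⬝ᵥ v = ⟪e, e⟫ := rfl
    rw [this, real_inner_self_eq_norm_sq]
  rw [h1, h4]
  nlinarith [norm_nonneg e, norm_nonneg (Matrix.toEuclideanLin M e)]

lemma dp_nonneg {n : ℕ} (v : Fin n → ℝ) : (0:ℝ) ≤ v ⬝ᵥ v :=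
  Finset.sum_nonneg fun i _ => mul_self_nonneg _

/-- The shifted block matrix `M(λ) = [[M₁₁, M₁₂],[M₁₂ᵀ, M₂₂ − λI]]`. -/
noncomputable def Mshift {m q : ℕ} (M11 : Matrix (Fin m) (Fin m) ℝ)
    (M12 : Matrix (Fin m) (Fin q) ℝ) (M22 : Matrix (Fin q) (Fin q) ℝ) (lam : ℝ) :
    Matrix (Fin m ⊕ Fin q) (Fin m ⊕ Fin q) ℝ :=
  Matrix.fromBlocks M11 M12 M12ᵀ (M22 - lam • (1 : Matrix (Fin q) (Fin q) ℝ))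

/-- The Lagrangian `L(u,w,λ) = ½(u,w)ᵀM(λ)(u,w) + (u,w)ᵀd + λ/2`. -/
noncomputable def Lquad {m q : ℕ} (M11 : Matrix (Fin m) (Fin m) ℝ)
    (M12 : Matrix (Fin m) (Fin q) ℝ) (M22 : Matrix (Fin q) (Fin q) ℝ)
    (d : Fin m ⊕ Fin q → ℝ) (lam : ℝ) (u : Fin m → ℝ) (w : Fin q → ℝ) : ℝ :=
  (1 / 2) * (Sum.elim u w ⬝ᵥ (Mshift M11 M12 M22 lam).mulVec (Sum.elim u w)) +
    Sum.elim u w ⬝ᵥ d + lam / 2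

/-- **Saddle point of the shifted quadratic Lagrangian.**
If `M(0) ⪰ 0`, `M₁₁ ≻ 0`, `M₂₂` symmetric, and `λ > ‖M₂₂‖`, then `M(λ)` is invertible and
`(u*, w*) = −M(λ)⁻¹d` is a saddle point of `L(·,·,λ)`, with saddle value
`−½ dᵀM(λ)⁻¹d + λ/2`. -/
theorem quadratic_saddle_point {m q : ℕ}
    (M11 : Matrix (Fin m) (Fin m) ℝ) (M12 : Matrix (Fin m) (Fin q) ℝ)
    (M22 : Matrix (Fin q) (Fin q) ℝ) (d : Fin m ⊕ Fin q → ℝ) (lam : ℝ)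
    (hM11 : M11.PosDef) (hM22 : M22.IsHermitian)
    (hM0 : (Matrix.fromBlocks M11 M12 M12ᵀ M22).PosSemidef)
    (hlam : l2n M22 < lam) :
    IsUnit (Mshift M11 M12 M22 lam) ∧
    (∀ w : Fin q → ℝ,
      Lquad M11 M12 M22 d lam
          (fun i => (-(Mshift M11 M12 M22 lam)⁻¹.mulVec d) (Sum.inl i)) w ≤
        Lquad M11 M12 M22 d lam
          (fun i => (-(Mshift M11 M12 M22 lam)⁻¹.mulVec d) (Sum.inl i))
          (fun j => (-(Mshift M11 M12 M22 lam)⁻¹.mulVec d) (Sum.inr j))) ∧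
    (∀ u : Fin m → ℝ,
      Lquad M11 M12 M22 d lam
          (fun i => (-(Mshift M11 M12 M22 lam)⁻¹.mulVec d) (Sum.inl i))
          (fun j => (-(Mshift M11 M12 M22 lam)⁻¹.mulVec d) (Sum.inr j)) ≤
        Lquad M11 M12 M22 d lam u
          (fun j => (-(Mshift M11 M12 M22 lam)⁻¹.mulVec d) (Sum.inr j))) ∧
    Lquad M11 M12 M22 d lam
        (fun i => (-(Mshift M11 M12 M22 lam)⁻¹.mulVec d) (Sum.inl i))
        (fun j => (-(Mshift M11 M12 M22 lam)⁻¹.mulVec d) (Sum.inr j)) =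
      -(1 / 2) * (d ⬝ᵥ (Mshift M11 M12 M22 lam)⁻¹.mulVec d) + lam / 2 := by
  set A := Mshift M11 M12 M22 lam with hAdef
  -- symmetry
  have hM11t : M11ᵀ = M11 := by
    simpa [Matrix.conjTranspose_eq_transpose_of_trivial, Matrix.IsHermitian] using hM11.isHermitian
  have hM22t : M22ᵀ = M22 := by
    simpa [Matrix.conjTranspose_eq_transpose_of_trivial, Matrix.IsHermitian] using hM22
  have hAt : Aᵀ = A := by
    rw [hAdef, Mshift, Matrix.fromBlocks_transpose, Matrix.transpose_transpose, hM11t,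
      Matrix.transpose_sub, hM22t, Matrix.transpose_smul, Matrix.transpose_one]
  have hsymm : ∀ x y : Fin m ⊕ Fin q → ℝ, x ⬝ᵥ A.mulVec y = y ⬝ᵥ A.mulVec x := by
    intro x y
    rw [Matrix.dotProduct_mulVec, ← Matrix.mulVec_transpose, hAt, dotProduct_comm]
  -- negativity of shifted block
  have hneg : ∀ v : Fin q → ℝ, v ⬝ᵥ (M22 - lam • (1 : Matrix (Fin q) (Fin q) ℝ)).mulVec v
      ≤ (l2n M22 - lam) * (v ⬝ᵥ v) := by
    intro v
    have h1 : (M22 - lam • (1 : Matrix (Fin q) (Fin q) ℝ)).mulVec v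
        = M22.mulVec v - lam • v := by
      rw [Matrix.sub_mulVec, Matrix.smul_mulVec, Matrix.one_mulVec]
    rw [h1, dotProduct_sub, dotProduct_smul]
    have := l2n_bound M22 v
    simp only [smul_eq_mul]
    ring_nf
    nlinarith [this]
  have hnegle : ∀ v : Fin q → ℝ,
      v ⬝ᵥ (M22 - lam • (1 : Matrix (Fin q) (Fin q) ℝ)).mulVec v ≤ 0 := by
    intro v
    have h1 := hneg v
    have h2 : (0:ℝ) ≤ v ⬝ᵥ v := dp_nonneg v
    nlinarith
  -- strict negativity
  have hneglt : ∀ v : Fin q → ℝ, v ≠ 0 →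
      v ⬝ᵥ (M22 - lam • (1 : Matrix (Fin q) (Fin q) ℝ)).mulVec v < 0 := by
    intro v hv
    have h1 := hneg v
    have h2 : (0:ℝ) < v ⬝ᵥ v := by
      rcases lt_or_eq_of_le (dp_nonneg v) with h | h
      · exact h
      · exact absurd (dotProduct_self_eq_zero.mp h.symm) hv
    nlinarith
  -- invertibility
  have hker : ∀ z : Fin m ⊕ Fin q → ℝ, A.mulVec z = 0 → z = 0 := by
    intro z hz
    set u : Fin m → ℝ := fun i => z (Sum.inl i) with hu
    set w : Fin q → ℝ := fun j => z (Sum.inr j) with hw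
    have hze : z = Sum.elim u w := by
      funext i; cases i <;> rfl
    rw [hze, hAdef, Mshift, Matrix.fromBlocks_mulVec] at hz
    have h1 : M11.mulVec u + M12.mulVec w = 0 := by
      funext i; exact congrFun hz (Sum.inl i)
    have h2 : M12ᵀ.mulVec u + (M22 - lam • (1 : Matrix (Fin q) (Fin q) ℝ)).mulVec w = 0 := by
      funext j; exact congrFun hz (Sum.inr j)
    have e1 : u ⬝ᵥ M11.mulVec u + u ⬝ᵥ M12.mulVec w = 0 := by
      rw [← dotProduct_add, h1, dotProduct_zero]
    have e2 : w ⬝ᵥ M12ᵀ.mulVec u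
        + w ⬝ᵥ (M22 - lam • (1 : Matrix (Fin q) (Fin q) ℝ)).mulVec w = 0 := by
      rw [← dotProduct_add, h2, dotProduct_zero]
    have e3 : u ⬝ᵥ M12.mulVec w = w ⬝ᵥ M12ᵀ.mulVec u := by
      rw [Matrix.dotProduct_mulVec, ← Matrix.mulVec_transpose, dotProduct_comm]
    have hw0 : w = 0 := by
      by_contra hw0
      have := hneglt w hw0
      have hp : (0:ℝ) ≤ u ⬝ᵥ M11.mulVec u := by
        simpa using hM11.posSemidef.dotProduct_mulVec_nonneg u
      linarith
    have hu0 : u = 0 := by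
      by_contra hu0
      have hp : (0:ℝ) < u ⬝ᵥ M11.mulVec u := by
        simpa using hM11.dotProduct_mulVec_pos hu0
      rw [hw0] at e1 e3
      simp only [Matrix.mulVec_zero, dotProduct_zero] at e1
      linarith
    rw [hze, hu0, hw0]
    funext i; cases i <;> rfl
  have hunit : IsUnit A := by
    rw [← Matrix.mulVec_injective_iff_isUnit]
    intro x y hxy
    have : A.mulVec (x - y) = 0 := by
      rw [Matrix.mulVec_sub, hxy, sub_self]
    have := hker _ this
    exact sub_eq_zero.mp this
  have hdet : IsUnit A.det := (Matrix.isUnit_iff_isUnit_det A).mp hunit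
  -- saddle point
  set xs : Fin m ⊕ Fin q → ℝ := -(A⁻¹.mulVec d) with hxs
  have hAxs : A.mulVec xs = -d := by
    rw [hxs, Matrix.mulVec_neg, Matrix.mulVec_mulVec, Matrix.mul_nonsing_inv A hdet,
      Matrix.one_mulVec]
  have key : ∀ x : Fin m ⊕ Fin q → ℝ,
      (1/2) * (x ⬝ᵥ A.mulVec x) + x ⬝ᵥ d
        - ((1/2) * (xs ⬝ᵥ A.mulVec xs) + xs ⬝ᵥ d)
        = (1/2) * ((x - xs) ⬝ᵥ A.mulVec (x - xs)) := by
    intro x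
    have h1 : (x - xs) ⬝ᵥ A.mulVec (x - xs)
        = x ⬝ᵥ A.mulVec x - 2 * (x ⬝ᵥ A.mulVec xs) + xs ⬝ᵥ A.mulVec xs := by
      rw [Matrix.mulVec_sub, dotProduct_sub, sub_dotProduct,
        sub_dotProduct, hsymm xs x]
      ring
    have h2 : x ⬝ᵥ A.mulVec xs = -(x ⬝ᵥ d) := by
      rw [hAxs, dotProduct_neg]
    have h3 : xs ⬝ᵥ A.mulVec xs = -(xs ⬝ᵥ d) := by
      rw [hAxs, dotProduct_neg]
    rw [h1, h2, h3]; ring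
  -- notation for the saddle components
  set us : Fin m → ℝ := fun i => xs (Sum.inl i) with hus
  set ws : Fin q → ℝ := fun j => xs (Sum.inr j) with hws
  have helim : Sum.elim us ws = xs := by funext i; cases i <;> rfl
  have hLs : ∀ u w, Lquad M11 M12 M22 d lam u w
      = (1/2) * (Sum.elim u w ⬝ᵥ A.mulVec (Sum.elim u w)) + Sum.elim u w ⬝ᵥ d + lam / 2 := by
    intro u w; rw [Lquad, ← hAdef]
  refine ⟨hunit, ?_, ?_, ?_⟩
  · intro w
    rw [hLs, hLs, helim]
    have hdiff : Sum.elim us w - xs = Sum.elim (0 : Fin m → ℝ) (w - ws) := by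
      funext i; cases i with
      | inl i => simp [← helim]
      | inr j => simp [← helim]
    have hk := key (Sum.elim us w)
    rw [hdiff] at hk
    have hform : Sum.elim (0 : Fin m → ℝ) (w - ws) ⬝ᵥ
        A.mulVec (Sum.elim (0 : Fin m → ℝ) (w - ws))
        = (w - ws) ⬝ᵥ (M22 - lam • (1 : Matrix (Fin q) (Fin q) ℝ)).mulVec (w - ws) := by
      rw [hAdef, Mshift, Matrix.fromBlocks_mulVec, sumElim_dotProduct_sumElim]
      simp [Matrix.mulVec_zero]
    rw [hform] at hk
    have := hnegle (w - ws)
    linarith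
  · intro u
    rw [hLs, hLs, helim]
    have hdiff : Sum.elim u ws - xs = Sum.elim (u - us) (0 : Fin q → ℝ) := by
      funext i; cases i with
      | inl i => simp [← helim]
      | inr j => simp [← helim]
    have hk := key (Sum.elim u ws)
    rw [hdiff] at hk
    have hform : Sum.elim (u - us) (0 : Fin q → ℝ) ⬝ᵥ
        A.mulVec (Sum.elim (u - us) (0 : Fin q → ℝ))
        = (u - us) ⬝ᵥ M11.mulVec (u - us) := by
      rw [hAdef, Mshift, Matrix.fromBlocks_mulVec, sumElim_dotProduct_sumElim]
      simp [Matrix.mulVec_zero]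
    rw [hform] at hk
    have hp : (0:ℝ) ≤ (u - us) ⬝ᵥ M11.mulVec (u - us) := by
      simpa using hM11.posSemidef.dotProduct_mulVec_nonneg (u - us)
    linarith
  · rw [hLs, helim]
    have h3 : xs ⬝ᵥ A.mulVec xs = -(xs ⬝ᵥ d) := by
      rw [hAxs, dotProduct_neg]
    have h4 : xs ⬝ᵥ d = -(d ⬝ᵥ A⁻¹.mulVec d) := by
      rw [hxs, neg_dotProduct, dotProduct_comm]
    rw [h3, h4]; ring
end

section
/- Let M₁₁ be an m×m real symmetric positive definite matrix, M₂₂ a q×q real symmetric matrix, and M₁₂ an m×q real matrix such that the block matrix M(0) = [[M₁₁, M₁₂],[M₁₂ᵀ, M₂₂]] is positive semidefinite. Define the Schur complement M̃₁₁ = M₂₂ − M₁₂ᵀM₁₁⁻¹M₁₂. If ‖M̃₁₁‖ < ‖M₂₂‖, then the matrix M(‖M₂₂‖) = [[M₁₁, M₁₂],[M₁₂ᵀ, M₂₂ − ‖M₂₂‖·I]] is invertible. -/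
open Matrix RealInnerProductSpace

lemma quad_le_l2n {q : ℕ} (M : Matrix (Fin q) (Fin q) ℝ) (x : Fin q → ℝ) :
    star x ⬝ᵥ (M *ᵥ x) ≤ l2n M * (star x ⬝ᵥ x) := by
  set y : EuclideanSpace ℝ (Fin q) := (WithLp.equiv 2 (Fin q → ℝ)).symm x with hy
  have h1 : star x ⬝ᵥ (M *ᵥ x) = (inner ℝ y (Matrix.toEuclideanLin M y) : ℝ) := by
    rw [EuclideanSpace.inner_eq_star_dotProduct, dotProduct_comm]; rfl
  have h2 : star x ⬝ᵥ x = ‖y‖ ^ 2 := by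
    rw [← real_inner_self_eq_norm_sq, hy, WithLp.equiv_symm_apply, EuclideanSpace.inner_toLp_toLp,
      dotProduct_comm]
  rw [h1, h2]
  set T := LinearMap.toContinuousLinearMap (Matrix.toEuclideanLin M)
  calc (inner ℝ y (Matrix.toEuclideanLin M y) : ℝ) = inner ℝ y (T y) := rfl
    _ ≤ ‖y‖ * ‖T y‖ := real_inner_le_norm _ _
    _ ≤ ‖y‖ * (‖T‖ * ‖y‖) := by
        exact mul_le_mul_of_nonneg_left (T.le_opNorm y) (norm_nonneg _)
    _ = l2n M * ‖y‖ ^ 2 := by rw [l2n]; ring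

/-- **Invertibility at the critical multiplier when the Schur complement is strictly
smaller.**  If `M(0) = [[M₁₁, M₁₂],[M₁₂ᵀ, M₂₂]] ⪰ 0`, `M₁₁ ≻ 0`, and
`‖M₂₂ − M₁₂ᵀM₁₁⁻¹M₁₂‖ < ‖M₂₂‖`, then `M(‖M₂₂‖) = [[M₁₁, M₁₂],[M₁₂ᵀ, M₂₂ − ‖M₂₂‖I]]`
is invertible. -/
theorem invertible_at_critical {m q : ℕ}
    (M11 : Matrix (Fin m) (Fin m) ℝ) (M12 : Matrix (Fin m) (Fin q) ℝ)
    (M22 : Matrix (Fin q) (Fin q) ℝ)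
    (hM11 : M11.PosDef) (hM22 : M22.IsHermitian)
    (hM0 : (Matrix.fromBlocks M11 M12 M12ᵀ M22).PosSemidef)
    (hSchur : l2n (M22 - M12ᵀ * M11⁻¹ * M12) < l2n M22) :
    IsUnit (Matrix.fromBlocks M11 M12 M12ᵀ
      (M22 - l2n M22 • (1 : Matrix (Fin q) (Fin q) ℝ))) := by
  set c : ℝ := l2n M22 with hc
  set S : Matrix (Fin q) (Fin q) ℝ := M22 - M12ᵀ * M11⁻¹ * M12 with hS
  have hcpos : 0 < c := lt_of_le_of_lt (norm_nonneg _) hSchur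
  -- N := c • 1 - S is positive definite
  have hSherm : S.IsHermitian := by
    apply hM22.sub
    have := Matrix.isHermitian_conjTranspose_mul_mul M12 hM11.isHermitian.inv
    simpa using this
  have hNherm : (c • (1 : Matrix (Fin q) (Fin q) ℝ) - S).IsHermitian := by
    unfold Matrix.IsHermitian
    rw [Matrix.conjTranspose_sub, Matrix.conjTranspose_smul, hSherm.eq, Matrix.conjTranspose_one]
    simp
  have hN : (c • (1 : Matrix (Fin q) (Fin q) ℝ) - S).PosDef := by
    rw [Matrix.posDef_iff_dotProduct_mulVec]
    constructor
    · exact hNherm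
    · intro x hx
      have hxx : 0 < star x ⬝ᵥ x :=
        Matrix.dotProduct_star_self_pos_iff.mpr hx
      have hq := quad_le_l2n S x
      have : star x ⬝ᵥ ((c • (1 : Matrix (Fin q) (Fin q) ℝ) - S) *ᵥ x)
          = c * (star x ⬝ᵥ x) - star x ⬝ᵥ (S *ᵥ x) := by
        rw [Matrix.sub_mulVec, dotProduct_sub, Matrix.smul_mulVec,
          Matrix.one_mulVec, dotProduct_smul]
        simp [smul_eq_mul]
      rw [this]
      have : l2n S * (star x ⬝ᵥ x) < c * (star x ⬝ᵥ x) :=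
        mul_lt_mul_of_pos_right hSchur hxx
      linarith
  haveI : Invertible M11 := M11.invertibleOfIsUnitDet hM11.det_pos.ne'.isUnit
  rw [Matrix.isUnit_iff_isUnit_det, Matrix.det_fromBlocks₁₁, isUnit_iff_ne_zero]
  have hkey : M22 - c • (1 : Matrix (Fin q) (Fin q) ℝ) - M12ᵀ * M11⁻¹ * M12
      = -(c • (1 : Matrix (Fin q) (Fin q) ℝ) - S) := by
    rw [hS]; abel
  rw [← Matrix.invOf_eq_nonsing_inv] at hkey
  rw [hkey, Matrix.det_neg]
  have h1 : M11.det ≠ 0 := hM11.det_pos.ne'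
  have h2 : (c • (1 : Matrix (Fin q) (Fin q) ℝ) - S).det ≠ 0 := hN.det_pos.ne'
  simp only [mul_ne_zero_iff]
  refine ⟨h1, ?_, h2⟩
  simp [pow_ne_zero]
end

section
/- Let A be n×n, B n×m, G n×q real matrices, Q an n×n real symmetric positive semidefinite matrix, R an m×m real symmetric positive definite matrix, and P an n×n real symmetric positive semidefinite matrix. For λ > ‖GᵀPG‖ define M(λ) = [[BᵀPB + R, BᵀPG],[GᵀPB, GᵀPG − λI]] (which is invertible) and Π(λ) = Q + AᵀPA − AᵀP[B G] M(λ)⁻¹ [B G]ᵀ PA. Then the function (λ, x) ↦ ½ xᵀΠ(λ)x is jointly convex on the convex set {λ ∈ ℝ : λ > ‖GᵀPG‖} × ℝⁿ. -/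
open Matrix

section helpers

open RealInnerProductSpace

lemma dot_self_nonneg' {a : ℕ} (x : Fin a → ℝ) : 0 ≤ x ⬝ᵥ x :=
  Finset.sum_nonneg fun _ _ => mul_self_nonneg _

lemma dot_le_l2n_s16 {a : ℕ} (M : Matrix (Fin a) (Fin a) ℝ) (x : Fin a → ℝ) :
    x ⬝ᵥ M *ᵥ x ≤ l2n M * (x ⬝ᵥ x) := by
  set L := LinearMap.toContinuousLinearMap (Matrix.toEuclideanLin M) with hL
  set v : EuclideanSpace ℝ (Fin a) := (WithLp.equiv 2 _).symm x with hv
  have h1 : L v = (WithLp.equiv 2 (Fin a → ℝ)).symm (M *ᵥ x) := by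
    simp [hL, hv, Matrix.toEuclideanLin_apply_piLp_toLp]
  have h2 : x ⬝ᵥ M *ᵥ x = ⟪L v, v⟫ := by
    rw [h1]
    simp [PiLp.inner_apply, dotProduct, hv, mul_comm]
  have h3 : (x ⬝ᵥ x) = ‖v‖ ^ 2 := by
    rw [← real_inner_self_eq_norm_sq]
    simp [dotProduct, hv, EuclideanSpace.norm_sq_eq, ← sq]
  rw [h2, h3]
  calc ⟪L v, v⟫ ≤ ‖L v‖ * ‖v‖ := real_inner_le_norm _ _
    _ ≤ ‖L‖ * ‖v‖ * ‖v‖ := by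
        have := L.le_opNorm v
        nlinarith [norm_nonneg v, norm_nonneg (L v)]
    _ = l2n M * ‖v‖ ^ 2 := by rw [l2n]; ring

lemma dot_self_pos {a : ℕ} {x : Fin a → ℝ} (hx : x ≠ 0) : 0 < x ⬝ᵥ x :=
  (dot_self_nonneg' x).lt_of_ne fun h => hx (dotProduct_self_eq_zero.mp h.symm)

lemma dot_tmul {k l : Type*} [Fintype k] [Fintype l] (M : Matrix k l ℝ) (a : l → ℝ) (t : k → ℝ) :
    a ⬝ᵥ (Mᵀ *ᵥ t) = (M *ᵥ a) ⬝ᵥ t := by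
  rw [Matrix.dotProduct_mulVec, Matrix.vecMul_transpose]

lemma dot_symm_swap {k : Type*} [Fintype k] {M : Matrix k k ℝ} (hM : Mᵀ = M) (a b : k → ℝ) :
    a ⬝ᵥ (M *ᵥ b) = b ⬝ᵥ (M *ᵥ a) := by
  rw [Matrix.dotProduct_mulVec, ← Matrix.mulVec_transpose, hM, dotProduct_comm]

lemma psd_combo {k : Type*} [Fintype k] {S : Matrix k k ℝ} (hS : S.PosSemidef) (x y : k → ℝ)
    {a b : ℝ} (ha : 0 ≤ a) (hb : 0 ≤ b) (hab : a + b = 1) :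
    (a • x + b • y) ⬝ᵥ S *ᵥ (a • x + b • y) ≤ a * (x ⬝ᵥ S *ᵥ x) + b * (y ⬝ᵥ S *ᵥ y) := by
  have hxy := hS.dotProduct_mulVec_nonneg (x - y)
  simp only [star_trivial] at hxy
  have expand : (x - y) ⬝ᵥ S *ᵥ (x - y)
      = x ⬝ᵥ S *ᵥ x - x ⬝ᵥ S *ᵥ y - y ⬝ᵥ S *ᵥ x + y ⬝ᵥ S *ᵥ y := by
    simp [Matrix.mulVec_sub, dotProduct_sub, sub_dotProduct]
    ring
  have key : a * (x ⬝ᵥ S *ᵥ x) + b * (y ⬝ᵥ S *ᵥ y)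
      - (a • x + b • y) ⬝ᵥ S *ᵥ (a • x + b • y)
      = a * b * ((x - y) ⬝ᵥ S *ᵥ (x - y)) := by
    simp only [Matrix.mulVec_add, Matrix.mulVec_smul, dotProduct_add, add_dotProduct,
      smul_dotProduct, dotProduct_smul, smul_eq_mul, expand]
    linear_combination (-(a * (x ⬝ᵥ S *ᵥ x)) - b * (y ⬝ᵥ S *ᵥ y)) * hab
  nlinarith [mul_nonneg ha hb, hxy]

end helpers

section setup

variable {n m q : ℕ} (A : Matrix (Fin n) (Fin n) ℝ) (B : Matrix (Fin n) (Fin m) ℝ)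
  (G : Matrix (Fin n) (Fin q) ℝ) (Q : Matrix (Fin n) (Fin n) ℝ)
  (R : Matrix (Fin m) (Fin m) ℝ) (P : Matrix (Fin n) (Fin n) ℝ) (lam : ℝ)

lemma psd_real {k : ℕ} {M : Matrix (Fin n) (Fin n) ℝ} (hM : M.PosSemidef)
    (C : Matrix (Fin n) (Fin k) ℝ) : (Cᵀ * M * C).PosSemidef := by
  have := hM.conjTranspose_mul_mul_same C
  rwa [Matrix.conjTranspose_eq_transpose_of_trivial] at this

lemma T_herm (hP : P.PosSemidef) : (Gᵀ * P * G)ᵀ = Gᵀ * P * G := by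
  have h := (psd_real hP G).1
  rw [Matrix.IsHermitian, Matrix.conjTranspose_eq_transpose_of_trivial] at h
  exact h

lemma lamT_posdef (hP : P.PosSemidef) (hlam : l2n (Gᵀ * P * G) < lam) :
    (lam • (1 : Matrix (Fin q) (Fin q) ℝ) - Gᵀ * P * G).PosDef := by
  refine Matrix.PosDef.of_dotProduct_mulVec_pos ?_ ?_
  · rw [Matrix.IsHermitian, Matrix.conjTranspose_eq_transpose_of_trivial,
      Matrix.transpose_sub, Matrix.transpose_smul, Matrix.transpose_one, T_herm G P hP]
  · intro x hx
    simp only [star_trivial, Matrix.sub_mulVec, dotProduct_sub,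
      Matrix.smul_mulVec, Matrix.one_mulVec, dotProduct_smul, smul_eq_mul]
    have h1 := dot_le_l2n_s16 (Gᵀ * P * G) x
    have h2 := dot_self_pos hx
    nlinarith

lemma S_posdef (hR : R.PosDef) (hP : P.PosSemidef) : (Bᵀ * P * B + R).PosDef :=
  Matrix.PosDef.posSemidef_add (psd_real hP B) hR

lemma Mmat_isUnit (hR : R.PosDef) (hP : P.PosSemidef)
    (hlam : l2n (Gᵀ * P * G) < lam) : IsUnit (Mmat B G R P lam) := by
  have hPt : Pᵀ = P := by
    have h := hP.1
    rwa [Matrix.IsHermitian, Matrix.conjTranspose_eq_transpose_of_trivial] at h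
  have hS := S_posdef B R P hR hP
  letI : Invertible (Bᵀ * P * B + R) := hS.isUnit.invertible
  have hCt : Gᵀ * P * B = (Bᵀ * P * G)ᵀ := by
    rw [Matrix.transpose_mul, Matrix.transpose_mul, Matrix.transpose_transpose, hPt,
      Matrix.mul_assoc]
  have hN : ((lam • (1 : Matrix (Fin q) (Fin q) ℝ) - Gᵀ * P * G)
      + (Bᵀ * P * G)ᵀ * (Bᵀ * P * B + R)⁻¹ * (Bᵀ * P * G)).PosDef :=
    (lamT_posdef G P lam hP hlam).add_posSemidef (psd_real hS.inv.posSemidef _)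
  have hschur : Gᵀ * P * G - lam • (1 : Matrix (Fin q) (Fin q) ℝ)
        - Gᵀ * P * B * ⅟(Bᵀ * P * B + R) * (Bᵀ * P * G)
      = -(((lam • (1 : Matrix (Fin q) (Fin q) ℝ) - Gᵀ * P * G)
      + (Bᵀ * P * G)ᵀ * (Bᵀ * P * B + R)⁻¹ * (Bᵀ * P * G))) := by
    rw [Matrix.invOf_eq_nonsing_inv, hCt]
    abel
  letI : Invertible (((lam • (1 : Matrix (Fin q) (Fin q) ℝ) - Gᵀ * P * G)
      + (Bᵀ * P * G)ᵀ * (Bᵀ * P * B + R)⁻¹ * (Bᵀ * P * G))) := hN.isUnit.invertible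
  letI : Invertible (Gᵀ * P * G - lam • (1 : Matrix (Fin q) (Fin q) ℝ)
      - Gᵀ * P * B * ⅟(Bᵀ * P * B + R) * (Bᵀ * P * G)) := by
    rw [hschur]; exact invertibleNeg _
  letI : Invertible (Mmat B G R P lam) := by
    rw [Mmat]
    exact Matrix.fromBlocks₁₁Invertible _ _ _ _
  exact isUnit_of_invertible _

end setup

/-- The optimal `[u; w]` for the saddle point. -/
noncomputable def zvec {n m q : ℕ} (A : Matrix (Fin n) (Fin n) ℝ) (B : Matrix (Fin n) (Fin m) ℝ)
    (G : Matrix (Fin n) (Fin q) ℝ) (R : Matrix (Fin m) (Fin m) ℝ) (P : Matrix (Fin n) (Fin n) ℝ)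
    (lam : ℝ) (x : Fin n → ℝ) : Fin m ⊕ Fin q → ℝ :=
  -((Mmat B G R P lam)⁻¹ *ᵥ ((Matrix.fromCols B G)ᵀ *ᵥ (P *ᵥ (A *ᵥ x))))

noncomputable def ustar {n m q : ℕ} (A : Matrix (Fin n) (Fin n) ℝ) (B : Matrix (Fin n) (Fin m) ℝ)
    (G : Matrix (Fin n) (Fin q) ℝ) (R : Matrix (Fin m) (Fin m) ℝ) (P : Matrix (Fin n) (Fin n) ℝ)
    (lam : ℝ) (x : Fin n → ℝ) : Fin m → ℝ := fun i => zvec A B G R P lam x (Sum.inl i)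

noncomputable def wstar {n m q : ℕ} (A : Matrix (Fin n) (Fin n) ℝ) (B : Matrix (Fin n) (Fin m) ℝ)
    (G : Matrix (Fin n) (Fin q) ℝ) (R : Matrix (Fin m) (Fin m) ℝ) (P : Matrix (Fin n) (Fin n) ℝ)
    (lam : ℝ) (x : Fin n → ℝ) : Fin q → ℝ := fun j => zvec A B G R P lam x (Sum.inr j)

/-- The minimizing `u` for fixed `x, w`. -/
noncomputable def uopt {n m q : ℕ} (A : Matrix (Fin n) (Fin n) ℝ) (B : Matrix (Fin n) (Fin m) ℝ)
    (G : Matrix (Fin n) (Fin q) ℝ) (R : Matrix (Fin m) (Fin m) ℝ) (P : Matrix (Fin n) (Fin n) ℝ)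
    (x : Fin n → ℝ) (w : Fin q → ℝ) : Fin m → ℝ :=
  -((Bᵀ * P * B + R)⁻¹ *ᵥ ((Bᵀ * P * G) *ᵥ w + Bᵀ *ᵥ (P *ᵥ (A *ᵥ x))))

/-- The partially minimized objective. -/
noncomputable def Hval {n m q : ℕ} (A : Matrix (Fin n) (Fin n) ℝ) (B : Matrix (Fin n) (Fin m) ℝ)
    (G : Matrix (Fin n) (Fin q) ℝ) (Q : Matrix (Fin n) (Fin n) ℝ) (R : Matrix (Fin m) (Fin m) ℝ)
    (P : Matrix (Fin n) (Fin n) ℝ) (lam : ℝ) (x : Fin n → ℝ) (w : Fin q → ℝ) : ℝ :=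
  (1/2) * ((A *ᵥ x + B *ᵥ (uopt A B G R P x w) + G *ᵥ w) ⬝ᵥ
      P *ᵥ (A *ᵥ x + B *ᵥ (uopt A B G R P x w) + G *ᵥ w))
    + (1/2) * (x ⬝ᵥ Q *ᵥ x)
    + (1/2) * ((uopt A B G R P x w) ⬝ᵥ R *ᵥ (uopt A B G R P x w))
    - (1/2) * lam * (w ⬝ᵥ w)

section core

variable {n m q : ℕ} (A : Matrix (Fin n) (Fin n) ℝ) (B : Matrix (Fin n) (Fin m) ℝ)
  (G : Matrix (Fin n) (Fin q) ℝ) (Q : Matrix (Fin n) (Fin n) ℝ)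
  (R : Matrix (Fin m) (Fin m) ℝ) (P : Matrix (Fin n) (Fin n) ℝ) (lam : ℝ) (x : Fin n → ℝ)

lemma block_eqs (hR : R.PosDef) (hP : P.PosSemidef) (hlam : l2n (Gᵀ * P * G) < lam) :
    ((Bᵀ * P * B + R) *ᵥ ustar A B G R P lam x + (Bᵀ * P * G) *ᵥ wstar A B G R P lam x
      = -(Bᵀ *ᵥ (P *ᵥ (A *ᵥ x)))) ∧
    ((Gᵀ * P * B) *ᵥ ustar A B G R P lam x + (Gᵀ * P * G) *ᵥ wstar A B G R P lam x
      - lam • wstar A B G R P lam x = -(Gᵀ *ᵥ (P *ᵥ (A *ᵥ x)))) := by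
  have hMu := Mmat_isUnit B G R P lam hR hP hlam
  have hz : Mmat B G R P lam *ᵥ zvec A B G R P lam x
      = -((Matrix.fromCols B G)ᵀ *ᵥ (P *ᵥ (A *ᵥ x))) := by
    rw [zvec, Matrix.mulVec_neg, Matrix.mulVec_mulVec,
      Matrix.mul_nonsing_inv _ ((Matrix.isUnit_iff_isUnit_det _).mp hMu), Matrix.one_mulVec]
  rw [Matrix.transpose_fromCols, Matrix.fromRows_mulVec] at hz
  rw [Mmat, Matrix.fromBlocks_mulVec] at hz
  have hu : zvec A B G R P lam x ∘ Sum.inl = ustar A B G R P lam x := rfl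
  have hw : zvec A B G R P lam x ∘ Sum.inr = wstar A B G R P lam x := rfl
  rw [hu, hw] at hz
  constructor
  · funext i
    have h := congrFun hz (Sum.inl i)
    simpa using h
  · funext j
    have h := congrFun hz (Sum.inr j)
    simp only [Sum.elim_inr, Pi.neg_apply] at h
    have h2 : ((Gᵀ * P * B) *ᵥ ustar A B G R P lam x
        + ((Gᵀ * P * G) *ᵥ wstar A B G R P lam x - lam • wstar A B G R P lam x)) j
        = -(Gᵀ *ᵥ (P *ᵥ (A *ᵥ x))) j := by
      rw [← h]
      simp [Matrix.sub_mulVec, Matrix.smul_mulVec, Matrix.one_mulVec]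
    simpa [add_sub_assoc] using h2

lemma uopt_split (hR : R.PosDef) (hP : P.PosSemidef) (hlam : l2n (Gᵀ * P * G) < lam)
    (dw : Fin q → ℝ) :
    uopt A B G R P x (wstar A B G R P lam x + dw)
      = ustar A B G R P lam x - (Bᵀ * P * B + R)⁻¹ *ᵥ ((Bᵀ * P * G) *ᵥ dw) := by
  have hS := S_posdef B R P hR hP
  have hSu : IsUnit (Bᵀ * P * B + R).det := (Matrix.isUnit_iff_isUnit_det _).mp hS.isUnit
  have E1 := (block_eqs A B G R P lam x hR hP hlam).1
  have hCw : (Bᵀ * P * G) *ᵥ wstar A B G R P lam x + Bᵀ *ᵥ (P *ᵥ (A *ᵥ x))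
      = -((Bᵀ * P * B + R) *ᵥ ustar A B G R P lam x) := by
    rw [← neg_eq_iff_eq_neg, neg_add, ← E1]
    abel
  rw [uopt, Matrix.mulVec_add ((Bᵀ * P * G)) (wstar A B G R P lam x) dw]
  rw [show (Bᵀ * P * G) *ᵥ wstar A B G R P lam x + (Bᵀ * P * G) *ᵥ dw + Bᵀ *ᵥ (P *ᵥ (A *ᵥ x))
      = ((Bᵀ * P * G) *ᵥ wstar A B G R P lam x + Bᵀ *ᵥ (P *ᵥ (A *ᵥ x))) + (Bᵀ * P * G) *ᵥ dw
      from by abel, hCw]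
  rw [Matrix.mulVec_add, Matrix.mulVec_neg, Matrix.mulVec_mulVec,
    Matrix.nonsing_inv_mul _ hSu, Matrix.one_mulVec]
  abel

lemma ricc_val (hR : R.PosDef) (hP : P.PosSemidef) (hlam : l2n (Gᵀ * P * G) < lam)
    (hPt : Pᵀ = P) :
    x ⬝ᵥ (riccStep A B G Q R P lam) *ᵥ x
      = x ⬝ᵥ Q *ᵥ x + (A *ᵥ x) ⬝ᵥ (P *ᵥ (A *ᵥ x))
        + (P *ᵥ (A *ᵥ x)) ⬝ᵥ (B *ᵥ ustar A B G R P lam x + G *ᵥ wstar A B G R P lam x) := by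
  have hz : Matrix.fromCols B G *ᵥ zvec A B G R P lam x
      = B *ᵥ ustar A B G R P lam x + G *ᵥ wstar A B G R P lam x := by
    have : zvec A B G R P lam x
        = Sum.elim (ustar A B G R P lam x) (wstar A B G R P lam x) := by
      funext i; cases i <;> rfl
    rw [this, Matrix.fromCols_mulVec_sumElim]
  have hdotP : ∀ t : Fin n → ℝ, (A *ᵥ x) ⬝ᵥ (P *ᵥ t) = (P *ᵥ (A *ᵥ x)) ⬝ᵥ t := by
    intro t
    rw [Matrix.dotProduct_mulVec, ← Matrix.mulVec_transpose, hPt]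
  have hAPA : x ⬝ᵥ (Aᵀ * P * A) *ᵥ x = (A *ᵥ x) ⬝ᵥ (P *ᵥ (A *ᵥ x)) := by
    rw [← Matrix.mulVec_mulVec, ← Matrix.mulVec_mulVec, dot_tmul]
  have hW : x ⬝ᵥ (Aᵀ * P * Matrix.fromCols B G * (Mmat B G R P lam)⁻¹ *
      (Matrix.fromCols B G)ᵀ * P * A) *ᵥ x
      = -((P *ᵥ (A *ᵥ x)) ⬝ᵥ (B *ᵥ ustar A B G R P lam x + G *ᵥ wstar A B G R P lam x)) := by
    rw [show Aᵀ * P * Matrix.fromCols B G * (Mmat B G R P lam)⁻¹ *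
        (Matrix.fromCols B G)ᵀ * P * A
        = Aᵀ * (P * (Matrix.fromCols B G * ((Mmat B G R P lam)⁻¹ *
          ((Matrix.fromCols B G)ᵀ * (P * A))))) from by simp only [Matrix.mul_assoc]]
    rw [← Matrix.mulVec_mulVec, dot_tmul, ← Matrix.mulVec_mulVec, hdotP,
      ← Matrix.mulVec_mulVec, ← Matrix.mulVec_mulVec, ← Matrix.mulVec_mulVec,
      ← Matrix.mulVec_mulVec]
    rw [show (Mmat B G R P lam)⁻¹ *ᵥ ((Matrix.fromCols B G)ᵀ *ᵥ (P *ᵥ (A *ᵥ x)))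
        = -zvec A B G R P lam x from by rw [zvec]; abel, Matrix.mulVec_neg, hz,
      dotProduct_neg]
  rw [riccStep, Matrix.sub_mulVec, Matrix.add_mulVec, dotProduct_sub, dotProduct_add, hAPA, hW]
  ring

lemma Hval_ident (hR : R.PosDef) (hP : P.PosSemidef) (hlam : l2n (Gᵀ * P * G) < lam)
    (hPt : Pᵀ = P) (hRt : Rᵀ = R) (dw : Fin q → ℝ) :
    Hval A B G Q R P lam x (wstar A B G R P lam x + dw)
      = (1/2) * (x ⬝ᵥ (riccStep A B G Q R P lam) *ᵥ x)
        - (1/2) * (((Bᵀ * P * G) *ᵥ dw) ⬝ᵥ (Bᵀ * P * B + R)⁻¹ *ᵥ ((Bᵀ * P * G) *ᵥ dw))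
        + (1/2) * (dw ⬝ᵥ (Gᵀ * P * G) *ᵥ dw) - (1/2) * lam * (dw ⬝ᵥ dw) := by
  have hS := S_posdef B R P hR hP
  have hSdet : IsUnit (Bᵀ * P * B + R).det := (Matrix.isUnit_iff_isUnit_det _).mp hS.isUnit
  have E1 := (block_eqs A B G R P lam x hR hP hlam).1
  have E2 := (block_eqs A B G R P lam x hR hP hlam).2
  have hSg : (Bᵀ * P * B + R) *ᵥ ((Bᵀ * P * B + R)⁻¹ *ᵥ ((Bᵀ * P * G) *ᵥ dw))
      = (Bᵀ * P * G) *ᵥ dw := by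
    rw [Matrix.mulVec_mulVec, Matrix.mul_nonsing_inv _ hSdet, Matrix.one_mulVec]
  set us := ustar A B G R P lam x with hus
  set ws := wstar A B G R P lam x with hws
  set gg := (Bᵀ * P * B + R)⁻¹ *ᵥ (Bᵀ *ᵥ (P *ᵥ (G *ᵥ dw))) with hgg
  have hgg' : (Bᵀ * P * B + R)⁻¹ *ᵥ ((Bᵀ * P * G) *ᵥ dw) = gg := by
    rw [hgg, ← Matrix.mulVec_mulVec, ← Matrix.mulVec_mulVec]
  rw [hgg'] at hSg
  have E1u := congrArg (fun v => us ⬝ᵥ v) E1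
  have E1g := congrArg (fun v => gg ⬝ᵥ v) E1
  have E2w := congrArg (fun v => ws ⬝ᵥ v) E2
  have E2d := congrArg (fun v => dw ⬝ᵥ v) E2
  have ESg := congrArg (fun v => gg ⬝ᵥ v) hSg
  -- canonicalizing swaps
  have hPs := dot_symm_swap hPt
  have sw1 : (A *ᵥ x) ⬝ᵥ (P *ᵥ (B *ᵥ us)) = (B *ᵥ us) ⬝ᵥ (P *ᵥ (A *ᵥ x)) := hPs _ _
  have sw2 : (A *ᵥ x) ⬝ᵥ (P *ᵥ (B *ᵥ gg)) = (B *ᵥ gg) ⬝ᵥ (P *ᵥ (A *ᵥ x)) := hPs _ _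
  have sw3 : (A *ᵥ x) ⬝ᵥ (P *ᵥ (G *ᵥ ws)) = (G *ᵥ ws) ⬝ᵥ (P *ᵥ (A *ᵥ x)) := hPs _ _
  have sw4 : (A *ᵥ x) ⬝ᵥ (P *ᵥ (G *ᵥ dw)) = (G *ᵥ dw) ⬝ᵥ (P *ᵥ (A *ᵥ x)) := hPs _ _
  have sw5 : (B *ᵥ us) ⬝ᵥ (P *ᵥ (B *ᵥ gg)) = (B *ᵥ gg) ⬝ᵥ (P *ᵥ (B *ᵥ us)) := hPs _ _
  have sw6 : (B *ᵥ us) ⬝ᵥ (P *ᵥ (G *ᵥ ws)) = (G *ᵥ ws) ⬝ᵥ (P *ᵥ (B *ᵥ us)) := hPs _ _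
  have sw7 : (B *ᵥ us) ⬝ᵥ (P *ᵥ (G *ᵥ dw)) = (G *ᵥ dw) ⬝ᵥ (P *ᵥ (B *ᵥ us)) := hPs _ _
  have sw8 : (B *ᵥ gg) ⬝ᵥ (P *ᵥ (G *ᵥ ws)) = (G *ᵥ ws) ⬝ᵥ (P *ᵥ (B *ᵥ gg)) := hPs _ _
  have sw9 : (B *ᵥ gg) ⬝ᵥ (P *ᵥ (G *ᵥ dw)) = (G *ᵥ dw) ⬝ᵥ (P *ᵥ (B *ᵥ gg)) := hPs _ _
  have sw10 : (G *ᵥ ws) ⬝ᵥ (P *ᵥ (G *ᵥ dw)) = (G *ᵥ dw) ⬝ᵥ (P *ᵥ (G *ᵥ ws)) := hPs _ _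
  have swR : us ⬝ᵥ (R *ᵥ gg) = gg ⬝ᵥ (R *ᵥ us) := dot_symm_swap hRt _ _
  have swd : ws ⬝ᵥ dw = dw ⬝ᵥ ws := dotProduct_comm _ _
  have swy1 : (P *ᵥ (A *ᵥ x)) ⬝ᵥ (B *ᵥ us) = (B *ᵥ us) ⬝ᵥ (P *ᵥ (A *ᵥ x)) :=
    dotProduct_comm _ _
  have swy2 : (P *ᵥ (A *ᵥ x)) ⬝ᵥ (G *ᵥ ws) = (G *ᵥ ws) ⬝ᵥ (P *ᵥ (A *ᵥ x)) :=
    dotProduct_comm _ _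
  have swE : (Bᵀ *ᵥ (P *ᵥ (G *ᵥ dw))) ⬝ᵥ gg = (B *ᵥ gg) ⬝ᵥ (P *ᵥ (G *ᵥ dw)) := by
    rw [dotProduct_comm, dot_tmul]
  rw [Hval, uopt_split A B G R P lam x hR hP hlam dw,
    ricc_val A B G Q R P lam x hR hP hlam hPt, hgg', ← hus, ← hws]
  simp only [← Matrix.mulVec_mulVec, Matrix.add_mulVec, Matrix.sub_mulVec, Matrix.mulVec_add,
    Matrix.mulVec_sub, Matrix.mulVec_neg, dotProduct_add, dotProduct_sub, dotProduct_neg,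
    neg_dotProduct, add_dotProduct, sub_dotProduct, dotProduct_smul, smul_dotProduct,
    smul_eq_mul, dot_tmul, sw1, sw2, sw3, sw4, sw5, sw6, sw7, sw8, sw9, sw10, swR, swd,
    swy1, swy2, swE] at E1u E1g E2w E2d ESg ⊢
  linear_combination (1/2 : ℝ) * E1u - E1g + (1/2 : ℝ) * E2w + E2d + (1/2 : ℝ) * ESg

lemma Hval_le (hR : R.PosDef) (hP : P.PosSemidef) (hlam : l2n (Gᵀ * P * G) < lam)
    (hPt : Pᵀ = P) (hRt : Rᵀ = R) (w : Fin q → ℝ) :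
    Hval A B G Q R P lam x w ≤ (1/2) * (x ⬝ᵥ (riccStep A B G Q R P lam) *ᵥ x) := by
  have hw : wstar A B G R P lam x + (w - wstar A B G R P lam x) = w := by abel
  have hid := Hval_ident A B G Q R P lam x hR hP hlam hPt hRt (w - wstar A B G R P lam x)
  rw [hw] at hid
  rw [hid]
  set dw := w - wstar A B G R P lam x
  have h1 : 0 ≤ ((Bᵀ * P * G) *ᵥ dw) ⬝ᵥ (Bᵀ * P * B + R)⁻¹ *ᵥ ((Bᵀ * P * G) *ᵥ dw) := by
    have := (S_posdef B R P hR hP).inv.posSemidef.dotProduct_mulVec_nonneg ((Bᵀ * P * G) *ᵥ dw)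
    simpa using this
  have h2 : dw ⬝ᵥ (Gᵀ * P * G) *ᵥ dw ≤ lam * (dw ⬝ᵥ dw) := by
    have := dot_le_l2n_s16 (Gᵀ * P * G) dw
    nlinarith [dot_self_nonneg' dw]
  linarith

lemma Hval_eq (hR : R.PosDef) (hP : P.PosSemidef) (hlam : l2n (Gᵀ * P * G) < lam)
    (hPt : Pᵀ = P) (hRt : Rᵀ = R) :
    Hval A B G Q R P lam x (wstar A B G R P lam x)
      = (1/2) * (x ⬝ᵥ (riccStep A B G Q R P lam) *ᵥ x) := by
  have hid := Hval_ident A B G Q R P lam x hR hP hlam hPt hRt 0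
  rw [add_zero] at hid
  rw [hid]
  simp [Matrix.mulVec_zero, dotProduct_zero]

lemma Hval_combo (hQ : Q.PosSemidef) (hP : P.PosSemidef) (hRp : R.PosSemidef)
    {a b : ℝ} (ha : 0 ≤ a) (hb : 0 ≤ b) (hab : a + b = 1)
    (l1 l2 : ℝ) (x1 x2 : Fin n → ℝ) (w : Fin q → ℝ) :
    Hval A B G Q R P (a * l1 + b * l2) (a • x1 + b • x2) w
      ≤ a * Hval A B G Q R P l1 x1 w + b * Hval A B G Q R P l2 x2 w := by
  have hCw : ∀ t1 t2 : Fin m → ℝ,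
      (Bᵀ * P * G) *ᵥ w + (a • t1 + b • t2)
        = a • ((Bᵀ * P * G) *ᵥ w + t1) + b • ((Bᵀ * P * G) *ᵥ w + t2) := by
    intro t1 t2
    rw [smul_add, smul_add, show a • ((Bᵀ * P * G) *ᵥ w) + a • t1
        + (b • ((Bᵀ * P * G) *ᵥ w) + b • t2)
        = (a • ((Bᵀ * P * G) *ᵥ w) + b • ((Bᵀ * P * G) *ᵥ w)) + (a • t1 + b • t2) from by abel,
      ← add_smul, hab, one_smul]
  have inner : (Bᵀ * P * G) *ᵥ w + Bᵀ *ᵥ (P *ᵥ (A *ᵥ (a • x1 + b • x2)))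
      = a • ((Bᵀ * P * G) *ᵥ w + Bᵀ *ᵥ (P *ᵥ (A *ᵥ x1)))
        + b • ((Bᵀ * P * G) *ᵥ w + Bᵀ *ᵥ (P *ᵥ (A *ᵥ x2))) := by
    simp only [Matrix.mulVec_add, Matrix.mulVec_smul]
    exact hCw _ _
  have hu : uopt A B G R P (a • x1 + b • x2) w
      = a • uopt A B G R P x1 w + b • uopt A B G R P x2 w := by
    rw [uopt, uopt, uopt, inner, smul_neg, smul_neg, Matrix.mulVec_add, Matrix.mulVec_smul,
      Matrix.mulVec_smul, neg_add]
  have hGw : G *ᵥ w = a • (G *ᵥ w) + b • (G *ᵥ w) := by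
    rw [← add_smul, hab, one_smul]
  have hv : A *ᵥ (a • x1 + b • x2) + B *ᵥ (uopt A B G R P (a • x1 + b • x2) w) + G *ᵥ w
      = a • (A *ᵥ x1 + B *ᵥ (uopt A B G R P x1 w) + G *ᵥ w)
        + b • (A *ᵥ x2 + B *ᵥ (uopt A B G R P x2 w) + G *ᵥ w) := by
    rw [hu, Matrix.mulVec_add, Matrix.mulVec_smul, Matrix.mulVec_smul,
      Matrix.mulVec_add, Matrix.mulVec_smul, Matrix.mulVec_smul]
    rw [smul_add, smul_add, smul_add, smul_add]
    rw [show a • (A *ᵥ x1) + a • (B *ᵥ uopt A B G R P x1 w) + a • (G *ᵥ w)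
        + (b • (A *ᵥ x2) + b • (B *ᵥ uopt A B G R P x2 w) + b • (G *ᵥ w))
        = (a • (A *ᵥ x1) + b • (A *ᵥ x2))
          + (a • (B *ᵥ uopt A B G R P x1 w) + b • (B *ᵥ uopt A B G R P x2 w))
          + (a • (G *ᵥ w) + b • (G *ᵥ w)) from by abel, ← hGw]
  rw [Hval, Hval, Hval, hv, hu]
  have t1 := psd_combo hP (A *ᵥ x1 + B *ᵥ (uopt A B G R P x1 w) + G *ᵥ w)
    (A *ᵥ x2 + B *ᵥ (uopt A B G R P x2 w) + G *ᵥ w) ha hb hab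
  have t2 := psd_combo hQ x1 x2 ha hb hab
  have t3 := psd_combo hRp (uopt A B G R P x1 w) (uopt A B G R P x2 w) ha hb hab
  have t4 : (a * l1 + b * l2) * (w ⬝ᵥ w) = a * (l1 * (w ⬝ᵥ w)) + b * (l2 * (w ⬝ᵥ w)) := by
    ring
  linarith
end core

/-- **Joint convexity of the Riccati-step quadratic form.**
For `λ > ‖GᵀPG‖`, `M(λ)` is invertible and
`Π(λ) = Q + AᵀPA − AᵀP[B G] M(λ)⁻¹ [B G]ᵀ PA` is well defined; the map
`(λ, x) ↦ ½ xᵀΠ(λ)x` is jointly convex on `{λ : λ > ‖GᵀPG‖} × ℝⁿ`. -/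
theorem riccati_quadratic_jointly_convex {n m q : ℕ}
    (A : Matrix (Fin n) (Fin n) ℝ) (B : Matrix (Fin n) (Fin m) ℝ)
    (G : Matrix (Fin n) (Fin q) ℝ)
    (Q : Matrix (Fin n) (Fin n) ℝ) (R : Matrix (Fin m) (Fin m) ℝ)
    (P : Matrix (Fin n) (Fin n) ℝ)
    (hQ : Q.PosSemidef) (hR : R.PosDef) (hP : P.PosSemidef) :
    ConvexOn ℝ {p : ℝ × (Fin n → ℝ) | l2n (Gᵀ * P * G) < p.1}
      (fun p => (1 / 2) * (p.2 ⬝ᵥ (riccStep A B G Q R P p.1).mulVec p.2)) := by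
  have hPt : Pᵀ = P := by
    have h := hP.1
    rwa [Matrix.IsHermitian, Matrix.conjTranspose_eq_transpose_of_trivial] at h
  have hRt : Rᵀ = R := by
    have h := hR.1
    rwa [Matrix.IsHermitian, Matrix.conjTranspose_eq_transpose_of_trivial] at h
  have hset : Convex ℝ {p : ℝ × (Fin n → ℝ) | l2n (Gᵀ * P * G) < p.1} := by
    have hs : {p : ℝ × (Fin n → ℝ) | l2n (Gᵀ * P * G) < p.1}
        = (LinearMap.fst ℝ ℝ (Fin n → ℝ)) ⁻¹' (Set.Ioi (l2n (Gᵀ * P * G))) := rfl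
    rw [hs]
    exact (convex_Ioi _).linear_preimage _
  refine ⟨hset, ?_⟩
  rintro ⟨l1, x1⟩ hp1 ⟨l2, x2⟩ hp2 a b ha hb hab
  have hmem := hset hp1 hp2 ha hb hab
  simp only [Set.mem_setOf_eq] at hp1 hp2 hmem
  simp only [Prod.smul_mk, Prod.mk_add_mk, smul_eq_mul] at hmem ⊢
  set wc := wstar A B G R P (a * l1 + b * l2) (a • x1 + b • x2) with hwc
  have key1 := Hval_eq A B G Q R P (a * l1 + b * l2) (a • x1 + b • x2) hR hP hmem hPt hRt
  have key2 := Hval_combo A B G Q R P hQ hP hR.posSemidef ha hb hab l1 l2 x1 x2 wc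
  have key3 := Hval_le A B G Q R P l1 x1 hR hP hp1 hPt hRt wc
  have key4 := Hval_le A B G Q R P l2 x2 hR hP hp2 hPt hRt wc
  have k3 := mul_le_mul_of_nonneg_left key3 ha
  have k4 := mul_le_mul_of_nonneg_left key4 hb
  rw [← hwc] at key1
  linarith [key1, key2, k3, k4]
end
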